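/- arXiv:2204.04125 — 4 statements merged into one kernel-verified Lean document; each statement's English description precedes it below -/
import Mathlib

section
/- Let G be a finite simple graph, let u and v be distinct vertices, and suppose there exist m pairwise edge-disjoint paths from u to v, each of length at most L. Let (X_e)_{e ∈ E(G)} be i.i.d. non-negative random variables with common distribution that of X, and define the first passage time T(u,v) as the infimum over all paths Γ from u to v of Σ_{e ∈ Γ} X_e. Then for every ε > 0, P(T(u,v) ≥ ε) ≤ (1 − P(X < ε/L)^L)^m. -/
open MeasureTheory ProbabilityTheory Filter

private lemma list_sum_lt_of_forall_lt (c : ℝ) :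
    ∀ l : List ℝ, l ≠ [] → (∀ x ∈ l, x < c) → l.sum < l.length * c := by
  intro l
  induction l with
  | nil => simp
  | cons x t ih =>
    intro _ h
    rcases eq_or_ne t List.nil with rfl | ht
    · simpa using h x (by simp)
    · have h1 := ih ht (fun y hy => h y (by simp [hy]))
      have hx := h x (by simp)
      simp only [List.sum_cons, List.length_cons]
      push_cast
      ring_nf
      ring_nf at h1
      linarith

/-- In a finite simple graph with `m` pairwise edge-disjoint paths between
distinct vertices `u ≠ v`, each of length at most `L`, and i.i.d. nonnegative edge weights
with common distribution that of `X₀`, the first passage time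
`T(u,v) = inf_Γ Σ_{e ∈ Γ} X e` satisfies
`P(T(u,v) ≥ ε) ≤ (1 − P(X₀ < ε/L)^L)^m` for every `ε > 0`. -/
theorem stmt2
    {Ω : Type*} [MeasureSpace Ω] [IsProbabilityMeasure (ℙ : Measure Ω)]
    {V : Type*} [Fintype V] (G : SimpleGraph V) (u v : V) (huv : u ≠ v)
    (m L : ℕ)
    (P : Fin m → G.Walk u v)
    (hPpath : ∀ i, (P i).IsPath)
    (hPlen : ∀ i, (P i).length ≤ L)
    (hPdisj : ∀ i j, i ≠ j → ∀ e, e ∈ (P i).edges → e ∉ (P j).edges)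
    (X : Sym2 V → Ω → ℝ) (hXmeas : ∀ e, Measurable (X e))
    (hXnonneg : ∀ e ω, 0 ≤ X e ω)
    (X₀ : Ω → ℝ)
    (hindep : iIndepFun (fun e : G.edgeSet => X e) ℙ)
    (hident : ∀ e ∈ G.edgeSet, IdentDistrib (X e) X₀ ℙ ℙ)
    (T : Ω → ℝ)
    (hT : ∀ ω, T ω = ⨅ Γ : {p : G.Walk u v // p.IsPath},
        ((Γ : G.Walk u v).edges.map (fun e => X e ω)).sum) :
    ∀ ε > (0 : ℝ),
      ℙ {ω | ε ≤ T ω} ≤ (1 - ℙ {ω | X₀ ω < ε / L} ^ L) ^ m := by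
  classical
  intro ε hε
  rcases Nat.eq_zero_or_pos m with rfl | hm
  · simpa using prob_le_one
  -- L ≥ 1
  have hlen_ne : ∀ i : Fin m, (P i).length ≠ 0 := fun i h =>
    huv (SimpleGraph.Walk.eq_of_length_eq_zero h)
  have hL1 : 1 ≤ L :=
    le_trans (Nat.one_le_iff_ne_zero.2 (hlen_ne ⟨0, hm⟩)) (hPlen ⟨0, hm⟩)
  have hLR : (0 : ℝ) < (L : ℝ) := by exact_mod_cast hL1
  set c : ℝ := ε / L with hc
  have hc0 : 0 < c := div_pos hε hLR
  -- edge finsets of the paths, within the edge set of G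
  set F : Fin m → Finset G.edgeSet := fun i =>
    ((P i).edges.attach.map (fun e =>
      (⟨e.1, SimpleGraph.Walk.edges_subset_edgeSet _ e.2⟩ : G.edgeSet))).toFinset with hF
  have hmemF : ∀ (i : Fin m) (e : G.edgeSet), e ∈ F i ↔ (e : Sym2 V) ∈ (P i).edges := by
    intro i e
    simp only [hF, List.mem_toFinset, List.mem_map, List.mem_attach, true_and]
    constructor
    · rintro ⟨a, rfl⟩; exact a.2
    · intro he; exact ⟨⟨(e : Sym2 V), he⟩, Subtype.ext rfl⟩
  have hcardF : ∀ i : Fin m, (F i).card = (P i).length := by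
    intro i
    have hnd : ((P i).edges.attach.map (fun e =>
        (⟨e.1, SimpleGraph.Walk.edges_subset_edgeSet _ e.2⟩ : G.edgeSet))).Nodup := by
      refine List.Nodup.map ?_ (List.nodup_attach.2 (hPpath i).edges_nodup)
      intro a b hab
      simpa [Subtype.ext_iff] using hab
    rw [hF]
    simp [List.toFinset_card_of_nodup hnd]
  set B : G.edgeSet → Set Ω := fun e => X e ⁻¹' Set.Iio c with hB
  have hBmeas : ∀ e : G.edgeSet, MeasurableSet (B e) := fun e =>
    (hXmeas e) measurableSet_Iio
  have hkey : ∀ S : Finset G.edgeSet, ℙ (⋂ e ∈ S, B e) = ∏ e ∈ S, ℙ (B e) := by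
    intro S
    exact hindep.meas_biInter (S := S)
      (fun e _ => ⟨Set.Iio c, measurableSet_Iio, rfl⟩)
  set p : ENNReal := ℙ {ω | X₀ ω < c} with hp
  have hBp : ∀ e : G.edgeSet, ℙ (B e) = p := by
    intro e
    have h := (hident e e.2).measure_mem_eq (s := Set.Iio c) measurableSet_Iio
    simpa [hB, hp, Set.preimage, Set.Iio] using h
  set A : Fin m → Set Ω := fun i => ⋂ e ∈ F i, B e with hA
  have hAmeas : ∀ i, MeasurableSet (A i) := fun i =>
    Finset.measurableSet_biInter (F i) (fun e _ => hBmeas e)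
  have hPA : ∀ i, ℙ (A i) = p ^ (P i).length := by
    intro i
    rw [hA, hkey (F i), Finset.prod_congr rfl (fun e _ => hBp e), Finset.prod_const, hcardF i]
  -- independence of the events A i
  have hFdisj : ∀ (s : Finset (Fin m)), Set.PairwiseDisjoint (↑s) F := by
    intro s i _ j _ hij
    simp only [Function.onFun]
    rw [Finset.disjoint_left]
    intro e hei hej
    exact hPdisj i j hij e ((hmemF i e).1 hei) ((hmemF j e).1 hej)
  have hiIndepA : iIndepSet A ℙ := by
    rw [iIndepSet_iff_meas_biInter hAmeas]
    intro s
    have hU : (⋂ i ∈ s, A i) = ⋂ e ∈ s.biUnion F, B e := by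
      ext ω
      simp only [hA, Set.mem_iInter, Finset.mem_biUnion]
      constructor
      · rintro h e ⟨i, hi, hei⟩; exact h i hi e hei
      · intro h i hi e hei; exact h e ⟨i, hi, hei⟩
    rw [hU, hkey, Finset.prod_biUnion (hFdisj s)]
    exact Finset.prod_congr rfl (fun i _ => (hkey (F i)).symm)
  -- the inclusion
  have hsub : {ω | ε ≤ T ω} ⊆ ⋂ i, (A i)ᶜ := by
    intro ω hω
    rw [Set.mem_iInter]
    intro i hAi
    have hedge : ∀ e ∈ (P i).edges, X e ω < c := by
      intro e he
      have : (⟨e, SimpleGraph.Walk.edges_subset_edgeSet _ he⟩ : G.edgeSet) ∈ F i :=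
        (hmemF i _).2 he
      have := Set.mem_iInter₂.1 hAi _ this
      simpa [hB] using this
    set l : List ℝ := (P i).edges.map (fun e => X e ω) with hl
    have hlne : l ≠ [] := by
      simp only [hl, ne_eq, List.map_eq_nil_iff]
      intro h
      apply hlen_ne i
      rw [← SimpleGraph.Walk.length_edges, h]
      rfl
    have hlt : ∀ x ∈ l, x < c := by
      intro x hx
      rcases List.mem_map.1 hx with ⟨e, he, rfl⟩
      exact hedge e he
    have hsum : l.sum < ε := by
      have h1 := list_sum_lt_of_forall_lt c l hlne hlt
      have hlen : (l.length : ℝ) ≤ (L : ℝ) := by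
        have : l.length = (P i).length := by
          simp [hl, SimpleGraph.Walk.length_edges]
        rw [this]
        exact_mod_cast hPlen i
      have h2 : (l.length : ℝ) * c ≤ (L : ℝ) * c :=
        mul_le_mul_of_nonneg_right hlen hc0.le
      have h3 : (L : ℝ) * c = ε := by
        rw [hc]; field_simp
      linarith
    have hTle : T ω ≤ l.sum := by
      rw [hT ω]
      refine ciInf_le ⟨0, ?_⟩ (⟨P i, hPpath i⟩ : {p : G.Walk u v // p.IsPath})
      rintro x ⟨Γ, rfl⟩
      refine List.sum_nonneg ?_
      intro y hy
      rcases List.mem_map.1 hy with ⟨e, _, rfl⟩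
      exact hXnonneg e ω
    have := hω
    simp only [Set.mem_setOf_eq] at this
    linarith
  -- put everything together
  have hp1 : p ≤ 1 := prob_le_one
  calc ℙ {ω | ε ≤ T ω} ≤ ℙ (⋂ i, (A i)ᶜ) := measure_mono hsub
    _ = ∏ i, ℙ ((A i)ᶜ) := by
        refine ((iIndepSet_iff_iIndep A ℙ).1 hiIndepA).meas_iInter (fun i => ?_)
        exact (MeasurableSpace.measurableSet_generateFrom (show A i ∈ ({A i} : Set (Set Ω)) from rfl)).compl
    _ ≤ ∏ _i : Fin m, (1 - p ^ L) := by
        refine Finset.prod_le_prod' (fun i _ => ?_)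
        rw [prob_compl_eq_one_sub (hAmeas i), hPA i]
        exact tsub_le_tsub_left (pow_le_pow_right_of_le_one' hp1 (hPlen i)) 1
    _ = (1 - p ^ L) ^ m := by simp
end

section
/- Let D satisfy the power-law assumption with exponent τ ∈ (1,2) and slowly varying function ℓ, and fix 0 < α < 1/(τ−1). Let (D_i(n))_{i=1}^n be i.i.d. copies of D(n), the variable D conditioned to be at most n^α, and set M_n = Σ_{i=1}^n D_i(n). Then M_n / E[M_n] → 1 in probability as n → ∞. -/
open MeasureTheory ProbabilityTheory Filter

/-- A function `ℓ : ℝ → ℝ` is slowly varying if it is eventually positive and for every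
`c > 0`, `ℓ(cx)/ℓ(x) → 1` as `x → ∞`. -/
def SlowlyVarying (ℓ : ℝ → ℝ) : Prop :=
  (∀ᶠ x in atTop, 0 < ℓ x) ∧
    ∀ c > (0 : ℝ), Tendsto (fun x => ℓ (c * x) / ℓ x) atTop (nhds 1)

lemma auxA (T ℓ : ℝ → ℝ) (β s : ℝ) (hβ : 0 < β) (hs : β < s)
    (hT : ∀ x y, x ≤ y → T y ≤ T x)
    (hTpow : ∀ x ≥ (1:ℝ), T x = ℓ x * x ^ (-β))
    (hℓ : SlowlyVarying ℓ) :
    Tendsto (fun x => x ^ s * T x) atTop atTop := by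
  set γ : ℝ := s - β with hγdef
  have hγ : 0 < γ := by simp [hγdef]; linarith
  set θ : ℝ := (2:ℝ) ^ (-(γ/2)) with hθdef
  have hθpos : 0 < θ := Real.rpow_pos_of_pos (by norm_num) _
  have hθlt : θ < 1 := by
    rw [hθdef]
    apply Real.rpow_lt_one_of_one_lt_of_neg (by norm_num)
    linarith
  -- eventual step inequality
  have hratio : ∀ᶠ x in atTop, θ < ℓ (2 * x) / ℓ x :=
    (hℓ.2 2 (by norm_num)).eventually (eventually_gt_nhds hθlt)
  have hstep : ∀ᶠ x in atTop, (0 < ℓ x ∧ θ * ℓ x ≤ ℓ (2 * x)) ∧ 1 ≤ x := by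
    filter_upwards [hratio, hℓ.1, eventually_ge_atTop (1:ℝ)] with x h1 h2 h3
    refine ⟨⟨h2, ?_⟩, h3⟩
    have := (div_le_div_iff_of_pos_right h2).mpr h1.le
    calc θ * ℓ x ≤ (ℓ (2*x) / ℓ x) * ℓ x := by
          apply mul_le_mul_of_nonneg_right h1.le h2.le
      _ = ℓ (2*x) := by field_simp
  obtain ⟨x0, hx0⟩ := hstep.exists_forall_of_atTop
  have hx0one : (1:ℝ) ≤ x0 := (hx0 x0 le_rfl).2
  have hx0pos : (0:ℝ) < x0 := by linarith
  have hℓx0 : 0 < ℓ x0 := (hx0 x0 le_rfl).1.1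
  -- induction along powers of 2
  have hind : ∀ k : ℕ, θ ^ (k:ℕ) * ℓ x0 ≤ ℓ (2 ^ k * x0) := by
    intro k
    induction k with
    | zero => simp
    | succ k ih =>
      have h2k : x0 ≤ 2 ^ k * x0 := le_mul_of_one_le_left hx0pos.le (one_le_pow₀ (by norm_num))
      have := (hx0 _ h2k).1.2
      calc θ ^ (k+1) * ℓ x0 = θ * (θ ^ k * ℓ x0) := by ring
        _ ≤ θ * ℓ (2 ^ k * x0) := by nlinarith
        _ ≤ ℓ (2 * (2 ^ k * x0)) := this
        _ = ℓ (2 ^ (k+1) * x0) := by ring_nf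
  set C : ℝ := ℓ x0 * x0 ^ γ * (2:ℝ) ^ (-β) * θ with hCdef
  have hCpos : 0 < C := by
    apply mul_pos (mul_pos (mul_pos hℓx0 (Real.rpow_pos_of_pos hx0pos _)) (Real.rpow_pos_of_pos (by norm_num) _)) hθpos
  have key : ∀ x ≥ x0, C * (x / (2 * x0)) ^ (γ/2) ≤ x ^ s * T x := by
    intro x hx
    have hxpos : 0 < x := lt_of_lt_of_le hx0pos hx
    have hq1 : (1:ℝ) ≤ x / x0 := (one_le_div hx0pos).mpr hx
    set k : ℕ := ⌊Real.logb 2 (x / x0)⌋₊ with hkdef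
    have hlogb0 : 0 ≤ Real.logb 2 (x / x0) := Real.logb_nonneg (by norm_num) hq1
    have h2k_le : (2:ℝ) ^ (k:ℕ) ≤ x / x0 := by
      have h1 : ((k:ℕ):ℝ) ≤ Real.logb 2 (x / x0) := Nat.floor_le hlogb0
      calc (2:ℝ) ^ (k:ℕ) = (2:ℝ) ^ ((k:ℕ):ℝ) := by rw [Real.rpow_natCast]
        _ ≤ (2:ℝ) ^ (Real.logb 2 (x/x0)) := by
            exact (Real.rpow_le_rpow_left_iff (by norm_num)).mpr h1
        _ = x / x0 := Real.rpow_logb (by norm_num) (by norm_num) (by positivity)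
    have h2k_gt : x / x0 < 2 ^ (k+1:ℕ) := by
      have h1 : Real.logb 2 (x / x0) < (k:ℝ) + 1 := Nat.lt_floor_add_one _
      calc x / x0 = (2:ℝ) ^ (Real.logb 2 (x/x0)) :=
            (Real.rpow_logb (by norm_num) (by norm_num) (by positivity)).symm
        _ < (2:ℝ) ^ (((k:ℝ) + 1)) := by
            apply Real.rpow_lt_rpow_left_iff (by norm_num : (1:ℝ)<2) |>.mpr h1
        _ = 2 ^ (k+1:ℕ) := by
            rw [← Real.rpow_natCast 2 (k+1)]; norm_num
    set y : ℝ := 2 ^ k * x0 with hydef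
    have hypos : 0 < y := by positivity
    have hy_le : y ≤ x := by
      rw [hydef]
      calc (2:ℝ)^k * x0 ≤ (x / x0) * x0 := by
            apply mul_le_mul_of_nonneg_right h2k_le hx0pos.le
        _ = x := by field_simp
    have hx_le : x ≤ 2 * y := by
      have : x / x0 ≤ 2 ^ (k+1:ℕ) := h2k_gt.le
      have := mul_le_mul_of_nonneg_right this hx0pos.le
      calc x = (x / x0) * x0 := by field_simp
        _ ≤ 2 ^ (k+1:ℕ) * x0 := by assumption
        _ = 2 * y := by rw [hydef]; ring
    have hyx0 : x0 ≤ y := le_mul_of_one_le_left hx0pos.le (one_le_pow₀ (by norm_num))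
    have h2y1 : (1:ℝ) ≤ 2 * y := by nlinarith
    have hℓ2y : θ ^ (k+1) * ℓ x0 ≤ ℓ (2 * y) := by
      have := hind (k+1)
      calc θ ^ (k+1) * ℓ x0 ≤ ℓ (2 ^ (k+1) * x0) := this
        _ = ℓ (2 * y) := by rw [hydef]; ring_nf
    have hT2y : T (2 * y) = ℓ (2*y) * (2*y) ^ (-β) := hTpow _ h2y1
    have hT2ypos : 0 ≤ T (2 * y) := by
      rw [hT2y]
      have : 0 < ℓ (2 * y) := by
        calc (0:ℝ) < θ ^ (k+1) * ℓ x0 := by positivity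
          _ ≤ _ := hℓ2y
      positivity
    -- main chain
    have step1 : y ^ s * T (2 * y) ≤ x ^ s * T x := by
      have h1 : T (2 * y) ≤ T x := hT x (2*y) hx_le
      have h2 : y ^ s ≤ x ^ s := Real.rpow_le_rpow hypos.le hy_le (by linarith)
      have : 0 ≤ y ^ s := (Real.rpow_pos_of_pos hypos s).le
      nlinarith
    have step2 : C * (2:ℝ) ^ ((k:ℝ) * (γ/2)) ≤ y ^ s * T (2 * y) := by
      rw [hT2y]
      have e1 : y ^ s * (ℓ (2*y) * (2*y) ^ (-β)) = (y ^ s * (2*y) ^ (-β)) * ℓ (2*y) := by ring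
      rw [e1]
      have e2 : y ^ s * (2*y) ^ (-β) = (2:ℝ)^(-β) * y ^ γ := by
        rw [Real.mul_rpow (by norm_num) hypos.le, mul_left_comm, ← Real.rpow_add hypos,
          hγdef]
        ring_nf
      rw [e2]
      have e3 : y ^ γ = (2:ℝ) ^ ((k:ℝ) * γ) * x0 ^ γ := by
        rw [hydef, Real.mul_rpow (by positivity) hx0pos.le, ← Real.rpow_natCast 2 k,
          ← Real.rpow_mul (by norm_num)]
      rw [e3]
      have hθk : θ ^ (k+1) = (2:ℝ) ^ (-(((k:ℝ)+1) * (γ/2))) := by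
        rw [hθdef, ← Real.rpow_natCast ((2:ℝ) ^ (-(γ/2))) (k+1), ← Real.rpow_mul (by norm_num)]
        push_cast
        ring_nf
      calc C * (2:ℝ) ^ ((k:ℝ) * (γ/2))
          = ((2:ℝ)^(-β) * ((2:ℝ) ^ ((k:ℝ)*γ) * x0 ^ γ)) * (θ ^ (k+1) * ℓ x0) := by
            rw [hCdef, hθk, hθdef,
              show ((k:ℝ)*γ) = (k:ℝ)*(γ/2) + (k:ℝ)*(γ/2) by ring,
              Real.rpow_add (by norm_num : (0:ℝ) < 2),
              show (-(((k:ℝ)+1) * (γ/2))) = -(γ/2) + -((k:ℝ)*(γ/2)) by ring,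
              Real.rpow_add (by norm_num : (0:ℝ) < 2),
              Real.rpow_neg (by norm_num : (0:ℝ) ≤ 2) ((k:ℝ)*(γ/2))]
            have hA : (2:ℝ)^((k:ℝ)*(γ/2)) ≠ 0 :=
              ne_of_gt (Real.rpow_pos_of_pos (by norm_num) _)
            field_simp
        _ ≤ ((2:ℝ)^(-β) * ((2:ℝ) ^ ((k:ℝ)*γ) * x0 ^ γ)) * ℓ (2*y) := by
            apply mul_le_mul_of_nonneg_left hℓ2y (by positivity)
        _ = (2:ℝ)^(-β) * ((2:ℝ) ^ ((k:ℝ)*γ) * x0 ^ γ) * ℓ (2*y) := by ring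
    have step3 : C * (x / (2 * x0)) ^ (γ/2) ≤ C * (2:ℝ) ^ ((k:ℝ) * (γ/2)) := by
      apply mul_le_mul_of_nonneg_left _ hCpos.le
      have h1 : x / (2 * x0) ≤ 2 ^ (k:ℕ) := by
        rw [div_le_iff₀ (by positivity)]
        calc x ≤ 2 * y := hx_le
          _ = 2 ^ k * (2 * x0) := by rw [hydef]; ring
        -- mismatch: need x ≤ 2^k * (2*x0)
      calc (x / (2*x0)) ^ (γ/2) ≤ ((2:ℝ) ^ (k:ℕ)) ^ (γ/2) := by
            apply Real.rpow_le_rpow (by positivity) h1 (by linarith)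
        _ = (2:ℝ) ^ ((k:ℝ) * (γ/2)) := by
            rw [← Real.rpow_natCast 2 k, ← Real.rpow_mul (by norm_num)]
      
    linarith
  -- conclude
  have hlow : Tendsto (fun x => C * (x / (2 * x0)) ^ (γ/2)) atTop atTop := by
    apply Tendsto.const_mul_atTop hCpos
    exact (tendsto_rpow_atTop (by linarith)).comp (tendsto_id.atTop_div_const (by positivity))
  exact tendsto_atTop_mono' _ (by filter_upwards [eventually_ge_atTop x0] with x hx using key x hx) hlow

lemma aux_pairwise_disj {Ω : Type*} (f : Ω → ℕ) (s : Set ℕ) :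
    s.PairwiseDisjoint (fun j => {ω | f ω = j}) := by
  intro a _ b _ hab
  rw [Function.onFun, Set.disjoint_left]
  intro ω h1 h2
  exact hab (h1.symm.trans h2)

lemma aux_measure_mem {Ω : Type*} [MeasureSpace Ω]
    (f : Ω → ℕ) (hf : Measurable f) (s : Set ℕ) :
    ℙ {ω | f ω ∈ s} = ∑' j : s, ℙ {ω | f ω = (j : ℕ)} := by
  have h1 : {ω | f ω ∈ s} = ⋃ j ∈ s, {ω | f ω = j} := by
    ext ω
    simp only [Set.mem_setOf_eq, Set.mem_iUnion]
    exact ⟨fun h => ⟨f ω, h, rfl⟩, fun ⟨j, hj, hji⟩ => hji ▸ hj⟩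
  rw [h1, measure_biUnion (Set.to_countable s) (aux_pairwise_disj f s)
    (fun j _ => hf (MeasurableSet.singleton j))]

set_option maxHeartbeats 1000000 in
/-- With `D` power-law with exponent `τ ∈ (1,2)` and slowly varying `ℓ`,
`0 < α < 1/(τ-1)`, and `D' n i` (for `i < n`) i.i.d. copies of `D` conditioned to be at most
`n^α`, the total degree `M_n = Σ_{i<n} D' n i` satisfies `M_n / E[M_n] → 1` in probability. -/
theorem stmt6
    {Ω : Type*} [MeasureSpace Ω] [IsProbabilityMeasure (ℙ : Measure Ω)]
    (D : Ω → ℕ) (hDmeas : Measurable D) (hDpos : ∀ ω, 1 ≤ D ω)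
    (τ : ℝ) (hτ : τ ∈ Set.Ioo (1 : ℝ) 2)
    (ℓ : ℝ → ℝ) (hℓ : SlowlyVarying ℓ)
    (hpow : ∀ x ≥ (1 : ℝ), (ℙ {ω | x < (D ω : ℝ)}).toReal = ℓ x * x ^ (-(τ - 1)))
    (α : ℝ) (hα : 0 < α) (hα' : α < 1 / (τ - 1))
    (D' : ℕ → ℕ → Ω → ℕ) (hD'meas : ∀ n i, Measurable (D' n i))
    (hD'indep : ∀ n, iIndepFun (fun i : Fin n => D' n i) ℙ)
    (hD'dist : ∀ n, ∀ i < n, ∀ j : ℕ,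
      ℙ {ω | D' n i ω = j}
        = if 1 ≤ j ∧ (j : ℝ) ≤ (n : ℝ) ^ α then
            ℙ {ω | D ω = j} / ℙ {ω | (D ω : ℝ) ≤ (n : ℝ) ^ α}
          else 0) :
    ∀ ε > (0 : ℝ),
      Tendsto
        (fun n : ℕ =>
          ℙ {ω | ε ≤ |(∑ i ∈ Finset.range n, (D' n i ω : ℝ)) /
              (∫ ω', ∑ i ∈ Finset.range n, (D' n i ω' : ℝ)) - 1|})
        atTop (nhds 0) := by
  intro ε hε
  obtain ⟨hτ1, hτ2⟩ := hτ
  set β : ℝ := τ - 1 with hβdef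
  have hβ0 : 0 < β := by simp only [hβdef]; linarith
  have hβ1 : β < 1 := by simp only [hβdef]; linarith
  have hαβ : α * β < 1 := by
    have h := (lt_div_iff₀ hβ0).mp hα'
    linarith
  set T : ℝ → ℝ := fun x => (ℙ {ω | x < (D ω : ℝ)}).toReal with hTdef
  have hTanti : ∀ x y : ℝ, x ≤ y → T y ≤ T x := by
    intro x y hxy
    apply ENNReal.toReal_mono (measure_ne_top _ _)
    exact measure_mono (fun ω h => lt_of_le_of_lt hxy h)
  have hTnonneg : ∀ x, 0 ≤ T x := fun x => ENNReal.toReal_nonneg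
  have hβs : β < 1 / α := (lt_div_iff₀ hα).mpr (by linarith)
  have hmainT : Tendsto (fun x => x ^ (1/α) * T x) atTop atTop :=
    auxA T ℓ β (1/α) hβ0 hβs hTanti (fun x hx => hpow x hx) hℓ
  have hKtend : Tendsto (fun n : ℕ => (n:ℝ) ^ α) atTop atTop :=
    (tendsto_rpow_atTop hα).comp tendsto_natCast_atTop_atTop
  have hnT : Tendsto (fun n : ℕ => (n:ℝ) * T ((n:ℝ) ^ α)) atTop atTop := by
    apply (hmainT.comp hKtend).congr'
    filter_upwards [eventually_ge_atTop 1] with n hn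
    have hn0 : (0:ℝ) ≤ (n:ℝ) := Nat.cast_nonneg n
    simp only [Function.comp_apply]
    congr 1
    rw [← Real.rpow_mul hn0, mul_one_div_cancel (ne_of_gt hα), Real.rpow_one]
  -- slow variation half-step constant
  set c' : ℝ := ((2:ℝ) ^ β - 1) / 2 with hc'def
  have h2β : 1 < (2:ℝ) ^ β := Real.one_lt_rpow_iff_of_pos (by norm_num) |>.mpr (by norm_num; exact hβ0)
  have hc'pos : 0 < c' := by simp only [hc'def]; linarith
  have hdiff : ∀ᶠ x in atTop, (c' * T x ≤ T (x/2) - T x ∧ 0 < T x) ∧ 1 ≤ x / 2 := by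
    have hratio' : Tendsto (fun x => ℓ ((1/2) * x) / ℓ x) atTop (nhds 1) := hℓ.2 (1/2) (by norm_num)
    set θ' : ℝ := ((2:ℝ)^(-β) + 1)/2 with hθ'def
    have h2negβ : (2:ℝ)^(-β) < 1 :=
      Real.rpow_lt_one_of_one_lt_of_neg (by norm_num) (by linarith)
    have hθ'lt : θ' < 1 := by
      simp only [hθ'def]; linarith
    filter_upwards [hratio'.eventually (eventually_gt_nhds hθ'lt), hℓ.1,
      eventually_ge_atTop (2:ℝ)] with x hr hp hx2
    have hx1 : (1:ℝ) ≤ x := by linarith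
    have hxpos : (0:ℝ) < x := by linarith
    have hx2' : (1:ℝ) ≤ x / 2 := by linarith
    have hTx : T x = ℓ x * x^(-β) := hpow x hx1
    have hTx2 : T (x/2) = ℓ (x/2) * (x/2)^(-β) := hpow _ hx2'
    have htpos : 0 < x ^ (-β) := Real.rpow_pos_of_pos hxpos _
    have hppos : (0:ℝ) < (2:ℝ)^β := Real.rpow_pos_of_pos (by norm_num) _
    have hℓhalf : θ' * ℓ x ≤ ℓ (x/2) := by
      have h := (lt_div_iff₀ hp).mp hr
      calc θ' * ℓ x ≤ ℓ ((1/2) * x) := h.le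
        _ = ℓ (x/2) := by ring_nf
    have hdr : (x/2) ^ (-β) = x^(-β) * (2:ℝ)^β := by
      rw [Real.div_rpow hxpos.le (by norm_num),
        Real.rpow_neg (by norm_num : (0:ℝ) ≤ 2)]
      field_simp
    have h2 : θ' * (x^(-β) * (2:ℝ)^β) - x^(-β) = c' * x^(-β) := by
      rw [hθ'def, hc'def, Real.rpow_neg (by norm_num : (0:ℝ) ≤ 2)]
      field_simp
      ring
    have hTpos : 0 < T x := by
      rw [hTx]; exact mul_pos hp htpos
    refine ⟨⟨?_, hTpos⟩, hx2'⟩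
    rw [hTx, hTx2, hdr]
    have h1 : (θ' * ℓ x) * (x^(-β) * (2:ℝ)^β) ≤ ℓ (x/2) * (x^(-β) * (2:ℝ)^β) :=
      mul_le_mul_of_nonneg_right hℓhalf (by positivity)
    have h3 : c' * (ℓ x * x^(-β)) = (θ' * ℓ x) * (x^(-β) * (2:ℝ)^β) - ℓ x * x^(-β) := by
      have hpinv : (2:ℝ)^(-β) * (2:ℝ)^β = 1 := by
        rw [← Real.rpow_add (by norm_num)]; simp
      linear_combination (ℓ x) * h2 - (ℓ x * x ^ (-β)) * hpinv
    linarith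
  -- bound sequence
  set B : ℕ → ℝ := fun n => (2 / (ε^2 * c')) * ((n:ℝ) * T ((n:ℝ) ^ α))⁻¹ with hBdef
  have hB0 : Tendsto B atTop (nhds 0) := by
    rw [show (0:ℝ) = (2 / (ε^2 * c')) * 0 by ring]
    exact hnT.inv_tendsto_atTop.const_mul _
  have hmain : ∀ᶠ n in atTop,
      ℙ {ω | ε ≤ |(∑ i ∈ Finset.range n, (D' n i ω : ℝ)) /
          (∫ ω', ∑ i ∈ Finset.range n, (D' n i ω' : ℝ)) - 1|} ≤ ENNReal.ofReal (B n) := by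
    filter_upwards [hKtend.eventually hdiff, eventually_ge_atTop 1] with n hn hn1
    set K : ℝ := (n:ℝ) ^ α with hKdef
    obtain ⟨⟨hdiffK, hTKpos⟩, hK2⟩ := hn
    have hK1 : (1:ℝ) ≤ K := by linarith
    have hKpos : (0:ℝ) < K := by linarith
    have hn0 : (0:ℝ) < (n:ℝ) := by exact_mod_cast hn1
    set X : ℕ → Ω → ℝ := fun i ω => (D' n i ω : ℝ) with hXdef
    have hXmeas : ∀ i, Measurable (X i) := fun i => measurable_from_top.comp (hD'meas n i)
    have hXnonneg : ∀ i ω, 0 ≤ X i ω := fun i ω => Nat.cast_nonneg _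
    -- a.e. bounds
    have hae : ∀ i < n, ∀ᵐ ω, 1 ≤ D' n i ω ∧ ((D' n i ω : ℝ)) ≤ K := by
      intro i hi
      rw [ae_iff]
      have h0 : ℙ {ω | D' n i ω ∈ {j : ℕ | ¬(1 ≤ j ∧ (j:ℝ) ≤ K)}} = 0 := by
        rw [aux_measure_mem _ (hD'meas n i)]
        rw [ENNReal.tsum_eq_zero]
        rintro ⟨j, hj⟩
        rw [hD'dist n i hi j, if_neg hj]
      exact h0
    -- probability comparison
    set S' : Set ℕ := {j : ℕ | K/2 < (j:ℝ) ∧ (j:ℝ) ≤ K} with hS'def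
    have hq1 : ℙ {ω | (D ω : ℝ) ≤ K} ≤ 1 := prob_le_one
    have hcompare : ∀ i < n, ℙ {ω | D ω ∈ S'} ≤ ℙ {ω | D' n i ω ∈ S'} := by
      intro i hi
      rw [aux_measure_mem D hDmeas, aux_measure_mem _ (hD'meas n i)]
      apply ENNReal.tsum_le_tsum
      rintro ⟨j, hj1, hj2⟩
      have hjpos : 0 < j := by
        have : (0:ℝ) < (j:ℝ) := by linarith
        exact_mod_cast this
      rw [hD'dist n i hi j, if_pos ⟨hjpos, hj2⟩]
      rcases eq_or_ne (ℙ {ω | D ω = j}) 0 with h0 | h0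
      · simp [h0]
      · rw [ENNReal.le_div_iff_mul_le (Or.inr h0) (Or.inr (measure_ne_top _ _))]
        calc ℙ {ω | D ω = j} * ℙ {ω | (D ω:ℝ) ≤ K} ≤ ℙ {ω | D ω = j} * 1 :=
            mul_le_mul_right hq1 _
          _ = ℙ {ω | D ω = j} := mul_one _
    -- tail difference identity
    have hsub : {ω | K < (D ω:ℝ)} ⊆ {ω | K/2 < (D ω:ℝ)} :=
      fun ω h => lt_of_le_of_lt (show K/2 ≤ K by linarith) h
    have hdm : (ℙ {ω | D ω ∈ S'}).toReal = T (K/2) - T K := by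
      have hDK : {ω | D ω ∈ S'} = {ω | K/2 < (D ω:ℝ)} \ {ω | K < (D ω:ℝ)} := by
        ext ω
        simp only [hS'def, Set.mem_setOf_eq, Set.mem_diff, not_lt]
      have hmK : MeasurableSet {ω | K < (D ω:ℝ)} :=
        hDmeas (MeasurableSet.of_discrete (s := {j : ℕ | K < (j:ℝ)}))
      rw [hDK, measure_diff hsub hmK.nullMeasurableSet (measure_ne_top _ _),
        ENNReal.toReal_sub_of_le (measure_mono hsub) (measure_ne_top _ _)]
    -- integrability
    have hXint : ∀ i < n, MemLp (X i) 2 ℙ := by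
      intro i hi
      refine MemLp.mono_exponent (q := ⊤) ?_ le_top
      apply memLp_top_of_bound ((hXmeas i).aestronglyMeasurable) K
      filter_upwards [hae i hi] with ω hω
      rw [Real.norm_eq_abs, abs_of_nonneg (hXnonneg i ω)]
      exact hω.2
    have hXintegrable : ∀ i < n, Integrable (X i) ℙ :=
      fun i hi => (hXint i hi).integrable one_le_two
    have hXsqint : ∀ i < n, Integrable (fun ω => X i ω ^ 2) ℙ := by
      intro i hi
      refine MemLp.integrable le_rfl (MemLp.mono_exponent (q := ⊤) ?_ le_top)
      apply memLp_top_of_bound (((hXmeas i).pow_const 2).aestronglyMeasurable) (K^2)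
      filter_upwards [hae i hi] with ω hω
      rw [Real.norm_eq_abs, abs_of_nonneg (by positivity)]
      have := hXnonneg i ω
      have h2 := hω.2
      nlinarith
    set e : ℕ → ℝ := fun i => ∫ ω, X i ω with hedef
    have he1 : ∀ i < n, 1 ≤ e i := by
      intro i hi
      have h := integral_mono_ae (integrable_const (1:ℝ)) (hXintegrable i hi) ?_
      · simpa using h
      · filter_upwards [hae i hi] with ω hω
        show (1:ℝ) ≤ ((D' n i ω : ℕ) : ℝ)
        exact_mod_cast hω.1
    set L : ℝ := (K/2) * (T (K/2) - T K) with hLdef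
    have heL : ∀ i < n, L ≤ e i := by
      intro i hi
      set A : Set Ω := {ω | K/2 < X i ω} with hAdef
      have hAmeas : MeasurableSet A := measurableSet_lt measurable_const (hXmeas i)
      have hind : ∀ ω, Set.indicator A (fun _ => K/2) ω ≤ X i ω := by
        intro ω
        by_cases hω : ω ∈ A
        · rw [Set.indicator_of_mem hω]
          exact le_of_lt hω
        · rw [Set.indicator_of_notMem hω]
          exact hXnonneg i ω
      have h1 : (ℙ A).toReal * (K/2) ≤ e i := by
        have h := integral_mono (Integrable.indicator (integrable_const (K/2)) hAmeas)
          (hXintegrable i hi) hind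
        rwa [integral_indicator_const _ hAmeas, smul_eq_mul] at h
      have h2 : ℙ {ω | D ω ∈ S'} ≤ ℙ A := by
        refine le_trans (hcompare i hi) (measure_mono ?_)
        intro ω hω
        exact hω.1
      have h3 : T (K/2) - T K ≤ (ℙ A).toReal := by
        rw [← hdm]
        exact ENNReal.toReal_mono (measure_ne_top _ _) h2
      calc L = (T (K/2) - T K) * (K/2) := by rw [hLdef]; ring
        _ ≤ (ℙ A).toReal * (K/2) := by
            apply mul_le_mul_of_nonneg_right h3 (by positivity)
        _ ≤ e i := h1
    -- variance bound per i
    have hVar : ∀ i < n, variance (X i) ℙ ≤ K * e i := by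
      intro i hi
      refine le_trans (variance_le_expectation_sq (μ := ℙ) ((hXmeas i).aestronglyMeasurable)) ?_
      have h2 : ∫ ω, (X i ^ 2) ω ≤ ∫ ω, K * X i ω := by
        refine integral_mono_ae ?_ ((hXintegrable i hi).const_mul K) ?_
        · exact hXsqint i hi
        · filter_upwards [hae i hi] with ω hω
          have h0 := hXnonneg i ω
          have hK' := hω.2
          simp only [Pi.pow_apply]
          nlinarith
      rwa [integral_const_mul] at h2
    -- the sum
    set S : Ω → ℝ := fun ω => ∑ i ∈ Finset.range n, X i ω with hSdef
    have hSeq : S = ∑ i ∈ Finset.range n, X i := by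
      funext ω; simp [hSdef]
    have hSmem : MemLp S 2 ℙ :=
      hSeq ▸ memLp_finset_sum' _ (fun i hi => hXint i (Finset.mem_range.mp hi))
    have hES : ∫ ω, S ω = ∑ i ∈ Finset.range n, e i :=
      integral_finset_sum _ (fun i hi => hXintegrable i (Finset.mem_range.mp hi))
    set ES : ℝ := ∫ ω, S ω with hESdef
    have hES1 : (n:ℝ) ≤ ES := by
      rw [hES]
      calc (n:ℝ) = ∑ _i ∈ Finset.range n, (1:ℝ) := by
            rw [Finset.sum_const, Finset.card_range, nsmul_eq_mul, mul_one]
        _ ≤ ∑ i ∈ Finset.range n, e i :=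
            Finset.sum_le_sum (fun i hi => he1 i (Finset.mem_range.mp hi))
    have hESpos : 0 < ES := lt_of_lt_of_le hn0 hES1
    have hESge : (n:ℝ) * L ≤ ES := by
      rw [hES]
      calc (n:ℝ) * L = ∑ _i ∈ Finset.range n, L := by
            rw [Finset.sum_const, Finset.card_range, nsmul_eq_mul]
        _ ≤ ∑ i ∈ Finset.range n, e i :=
            Finset.sum_le_sum (fun i hi => heL i (Finset.mem_range.mp hi))
    -- independence and variance of sum
    have hpair : Set.Pairwise ↑(Finset.range n) (fun i j => IndepFun (X i) (X j) ℙ) := by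
      intro i hi j hj hij
      have hi' : i < n := Finset.mem_range.mp hi
      have hj' : j < n := Finset.mem_range.mp hj
      have h := (hD'indep n).indepFun (i := ⟨i, hi'⟩) (j := ⟨j, hj'⟩)
        (by simp only [ne_eq, Fin.mk.injEq]; exact hij)
      exact h.comp measurable_from_top measurable_from_top
    have hVarS : variance S ℙ ≤ K * ES := by
      have hsum : variance (∑ i ∈ Finset.range n, X i) ℙ
          = ∑ i ∈ Finset.range n, variance (X i) ℙ :=
        IndepFun.variance_sum (fun i hi => hXint i (Finset.mem_range.mp hi)) hpair
      rw [hSeq, hsum, hES, Finset.mul_sum]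
      exact Finset.sum_le_sum (fun i hi => hVar i (Finset.mem_range.mp hi))
    -- Chebyshev
    have hεES : 0 < ε * ES := mul_pos hε hESpos
    have hcheb := meas_ge_le_variance_div_sq (μ := ℙ) hSmem hεES
    have hevent : {ω | ε ≤ |S ω / ES - 1|} = {ω | ε * ES ≤ |S ω - ES|} := by
      ext ω
      simp only [Set.mem_setOf_eq]
      rw [show S ω / ES - 1 = (S ω - ES)/ES by field_simp, abs_div,
        abs_of_pos hESpos, le_div_iff₀ hESpos]
    show ℙ {ω | ε ≤ |S ω / ES - 1|} ≤ ENNReal.ofReal (B n)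
    rw [hevent]
    refine le_trans hcheb (ENNReal.ofReal_le_ofReal ?_)
    have hLpos : 0 < L := by
      rw [hLdef]
      exact mul_pos (by positivity) (lt_of_lt_of_le (mul_pos hc'pos hTKpos) hdiffK)
    have hnL : 0 < (n:ℝ) * L := mul_pos hn0 hLpos
    have hlast : (n:ℝ) * ((K/2) * (c' * T K)) ≤ (n:ℝ) * L := by
      apply mul_le_mul_of_nonneg_left _ hn0.le
      rw [hLdef]
      exact mul_le_mul_of_nonneg_left hdiffK (by positivity)
    have hTKpos' : 0 < c' * T K := mul_pos hc'pos hTKpos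
    calc variance S ℙ / (ε * ES)^2 ≤ (K * ES) / (ε * ES)^2 := by
          gcongr
      _ = K / (ε^2 * ES) := by field_simp
      _ ≤ K / (ε^2 * ((n:ℝ) * ((K/2) * (c' * T K)))) := by
          gcongr
          exact le_trans hlast hESge
      _ = B n := by
          have hTK0 : T K ≠ 0 := ne_of_gt hTKpos
          have hn0' : (n:ℝ) ≠ 0 := ne_of_gt hn0
          have hε0 : ε ≠ 0 := ne_of_gt hε
          have hc'0 : c' ≠ 0 := ne_of_gt hc'pos
          have hK0 : K ≠ 0 := ne_of_gt hKpos
          have hgen : ∀ a b t u : ℝ, a ≠ 0 → b ≠ 0 → t ≠ 0 → u ≠ 0 → a ≠ 0 →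
              a / (u^2 * (b * (a/2 * (c' * t)))) = 2 / (u^2 * c') * (b * t)⁻¹ := by
            intro a b t u ha hb ht hu _
            field_simp
          rw [hBdef]
          simp only [← hKdef]
          exact hgen K (n:ℝ) (T K) ε hK0 hn0' hTK0 hε0 hK0
  refine tendsto_of_tendsto_of_tendsto_of_le_of_le' tendsto_const_nhds ?_
    (Eventually.of_forall fun n => zero_le) hmain
  have := ENNReal.tendsto_ofReal hB0
  simpa using this
end

section
/- Let D satisfy the power-law assumption with exponent τ ∈ (1,2) and slowly varying function ℓ, let (D_i)_{i≥1} be i.i.d. copies of D, and let (u_n) be a sequence of positive reals with n(1 − F(u_n)) → 1 as n → ∞. Let (ε_n) be any sequence of positive reals with ε_n → 0. Setting L_n = Σ_{i=1}^n D_i and K_n = Σ_{i=1}^n D_i·1{D_i ≤ ε_n u_n}, one has K_n / L_n → 0 in probability as n → ∞; that is, the total degree of the non-giant vertices is negligible compared to the total degree. -/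
open MeasureTheory ProbabilityTheory Filter
open scoped ENNReal

section Aux

lemma dyadic_exists {x : ℝ} (hx : 1 ≤ x) : ∃ j : ℕ, (2:ℝ)^j ≤ x ∧ x < 2^(j+1) := by
  refine ⟨Nat.log 2 ⌊x⌋₊, ?_, ?_⟩
  · have h1 : (2:ℕ) ^ Nat.log 2 ⌊x⌋₊ ≤ ⌊x⌋₊ := Nat.pow_log_le_self 2 (by
      have : 1 ≤ ⌊x⌋₊ := Nat.one_le_floor_iff x |>.2 hx
      omega)
    calc (2:ℝ)^Nat.log 2 ⌊x⌋₊ = ((2:ℕ)^Nat.log 2 ⌊x⌋₊ : ℕ) := by push_cast; ring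
    _ ≤ (⌊x⌋₊ : ℝ) := by exact_mod_cast h1
    _ ≤ x := Nat.floor_le (by linarith)
  · have h2 : ⌊x⌋₊ < 2 ^ (Nat.log 2 ⌊x⌋₊ + 1) := Nat.lt_pow_succ_log_self (by norm_num) _
    have h3 : x < (⌊x⌋₊ : ℝ) + 1 := Nat.lt_floor_add_one x
    have : (⌊x⌋₊ : ℝ) + 1 ≤ ((2:ℕ) ^ (Nat.log 2 ⌊x⌋₊ + 1) : ℕ) := by exact_mod_cast h2
    calc x < (⌊x⌋₊:ℝ) + 1 := h3
    _ ≤ ((2:ℕ) ^ (Nat.log 2 ⌊x⌋₊ + 1) : ℕ) := this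
    _ = (2:ℝ)^(Nat.log 2 ⌊x⌋₊ + 1) := by push_cast; ring
lemma ratio_bound {g : ℝ → ℝ} {ρ X : ℝ} (hg : Antitone g) (hg0 : ∀ x, 0 ≤ g x)
    (hρ1 : 1 ≤ ρ) (hX : 1 ≤ X)
    (hpot : ∀ x, X ≤ x → g x ≤ ρ * g (2*x)) :
    ∀ y z : ℝ, X ≤ y → y ≤ z → g y ≤ ρ * (z/y) ^ (Real.logb 2 ρ) * g z := by
  set β := Real.logb 2 ρ with hβ
  have hρ0 : (0:ℝ) < ρ := by linarith
  have hβ0 : 0 ≤ β := Real.logb_nonneg (by norm_num) hρ1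
  have h2β : (2:ℝ) ^ β = ρ := Real.rpow_logb (by norm_num) (by norm_num) hρ0
  have key : ∀ k : ℕ, ∀ y z : ℝ, X ≤ y → y ≤ z → z ≤ 2^k * y →
      g y ≤ ρ * (z/y) ^ β * g z := by
    intro k
    induction k with
    | zero =>
      intro y z hXy hyz hzk
      have hy0 : 0 < y := by linarith
      have : z = y := le_antisymm (by simpa using hzk) hyz
      subst this
      rw [div_self (ne_of_gt hy0), Real.one_rpow]
      nlinarith [hg0 z]
    | succ k ih =>
      intro y z hXy hyz hzk
      have hy0 : 0 < y := by linarith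
      have hfac : (1:ℝ) ≤ (z/y) ^ β := by
        apply Real.one_le_rpow (by rw [le_div_iff₀ hy0]; linarith) hβ0
      by_cases h2 : z ≤ 2*y
      · have h1 : g y ≤ ρ * g (2*y) := hpot y hXy
        have h3 : g (2*y) ≤ g z := hg h2
        calc g y ≤ ρ * g (2*y) := h1
        _ ≤ ρ * g z := mul_le_mul_of_nonneg_left h3 hρ0.le
        _ = ρ * 1 * g z := by ring
        _ ≤ ρ * (z/y) ^ β * g z :=
          mul_le_mul_of_nonneg_right (mul_le_mul_of_nonneg_left hfac hρ0.le) (hg0 z)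
      · push_neg at h2
        have h1 : g y ≤ ρ * g (2*y) := hpot y hXy
        have h4 : g (2*y) ≤ ρ * (z/(2*y)) ^ β * g z := by
          apply ih (2*y) z (by linarith) (le_of_lt h2) (by rw [pow_succ] at hzk; linarith)
        have hw0 : 0 < z/(2*y) := div_pos (by linarith) (by linarith)
        have heq : ρ * (z/(2*y)) ^ β = (z/y) ^ β := by
          have : z/y = 2 * (z/(2*y)) := by field_simp
          rw [this, Real.mul_rpow (by norm_num) (le_of_lt hw0), h2β]
        calc g y ≤ ρ * g (2*y) := h1
        _ ≤ ρ * (ρ * (z/(2*y)) ^ β * g z) := mul_le_mul_of_nonneg_left h4 hρ0.le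
        _ = ρ * (z/y) ^ β * g z := by rw [← heq]; ring
  intro y z hXy hyz
  obtain ⟨k, hk⟩ := pow_unbounded_of_one_lt (z/y) (by norm_num : (1:ℝ) < 2)
  exact key k y z hXy hyz (by rw [div_lt_iff₀ (by linarith : (0:ℝ) < y)] at hk; linarith)
lemma sum_bound {g : ℝ → ℝ} {ρ X : ℝ} (hg : Antitone g) (hg0 : ∀ x, 0 ≤ g x)
    (hg1 : ∀ x, g x ≤ 1) (hρ1 : 1 ≤ ρ) (hρ2 : ρ < 2) (hX : 1 ≤ X)
    (hpot : ∀ x, X ≤ x → g x ≤ ρ * g (2*x)) :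
    ∃ C0 C1 : ℝ, 0 ≤ C0 ∧ 0 ≤ C1 ∧
      ∀ M : ℕ, ∑ k ∈ Finset.range M, g k ≤ C0 + C1 * M * g M := by
  have h2ρ : (0:ℝ) < 2 - ρ := by linarith
  set C1 : ℝ := 4/(2-ρ) with hC1def
  have hC1 : 2 ≤ C1 := by rw [hC1def, le_div_iff₀ h2ρ]; nlinarith
  set M0 : ℕ := ⌈2*X + 8/(2-ρ)⌉₊ + 2 with hM0def
  have hM0a : 2*X + 8/(2-ρ) ≤ (M0:ℝ) := by
    have := Nat.le_ceil (2*X + 8/(2-ρ))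
    push_cast [hM0def]; linarith
  have h8 : 0 < 8/(2-ρ) := by positivity
  refine ⟨M0, C1, by positivity, by linarith, ?_⟩
  intro M
  induction M using Nat.strong_induction_on with
  | _ M ih =>
    by_cases hM : M ≤ M0
    · have h1 : ∑ k ∈ Finset.range M, g k ≤ (M:ℝ) := by
        calc ∑ k ∈ Finset.range M, g k ≤ ∑ k ∈ Finset.range M, 1 :=
          Finset.sum_le_sum (fun k _ => hg1 k)
        _ = (M:ℝ) := by simp
      have h2 : (0:ℝ) ≤ C1 * M * g M := by
        apply mul_nonneg (mul_nonneg (by linarith) (Nat.cast_nonneg M)) (hg0 M)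
      have : (M:ℝ) ≤ M0 := by exact_mod_cast hM
      linarith
    · push_neg at hM
      set M' : ℕ := (M+1)/2 with hM'def
      have hM'lt : M' < M := by omega
      have hM'2 : M ≤ 2 * M' := by omega
      have hM'3 : 2 * M' ≤ M + 1 := by omega
      have hMr : (M0:ℝ) + 1 ≤ (M:ℝ) := by exact_mod_cast hM
      have hM'r1 : (M:ℝ) ≤ 2 * M' := by exact_mod_cast hM'2
      have hM'r2 : 2 * (M':ℝ) ≤ M + 1 := by exact_mod_cast hM'3
      have hXM' : X ≤ (M':ℝ) := by linarith
      have hgM' : g M' ≤ ρ * g M := by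
        calc g (M':ℝ) ≤ ρ * g (2*(M':ℝ)) := hpot _ hXM'
        _ ≤ ρ * g M := by
          apply mul_le_mul_of_nonneg_left (hg hM'r1) (by linarith)
      have hsplit : ∑ k ∈ Finset.range M, g k
          = ∑ k ∈ Finset.range M', g k + ∑ k ∈ Finset.Ico M' M, g k := by
        rw [Finset.range_eq_Ico, Finset.range_eq_Ico]
        exact (Finset.sum_Ico_consecutive (fun k : ℕ => g k) (Nat.zero_le M') (le_of_lt hM'lt)).symm
      have htail : ∑ k ∈ Finset.Ico M' M, g k ≤ ((M:ℝ) - M') * g M' := by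
        have : ∀ k ∈ Finset.Ico M' M, g k ≤ g (M':ℝ) := by
          intro k hk
          rw [Finset.mem_Ico] at hk
          exact hg (by exact_mod_cast hk.1)
        calc ∑ k ∈ Finset.Ico M' M, g k ≤ (Finset.Ico M' M).card • g (M':ℝ) :=
          Finset.sum_le_card_nsmul _ _ _ this
        _ = ((M - M' : ℕ) : ℝ) * g M' := by rw [Nat.card_Ico]; simp
        _ = ((M:ℝ) - M') * g M' := by
          rw [Nat.cast_sub (le_of_lt hM'lt)]
      have hhead := ih M' hM'lt
      have hM'0 : (0:ℝ) ≤ M' := Nat.cast_nonneg M'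
      have hgM0 : 0 ≤ g (M:ℝ) := hg0 _
      have hgM'0 : 0 ≤ g (M':ℝ) := hg0 _
      -- combine
      have hcomb : ∑ k ∈ Finset.range M, g k
          ≤ M0 + (C1 * M' + ((M:ℝ) - M')) * g M' := by
        rw [hsplit]; nlinarith [htail, hhead]
      have hcoef : (C1 * M' + ((M:ℝ) - M')) * ρ ≤ C1 * M := by
        have h1 : (M':ℝ) ≤ (M+1)/2 := by linarith
        have h2 : (M:ℝ) - M' ≤ M/2 := by linarith
        have h3 : 8/(2-ρ) + 1 ≤ (M:ℝ) := by linarith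
        have hC1e : C1 * (2 - ρ) = 4 := by
          rw [hC1def]; field_simp
        have hMnn : (0:ℝ) ≤ M := Nat.cast_nonneg M
        have e0 : 2*C1 = 8/(2-ρ) := by rw [hC1def]; ring
        have e1 : ρ * C1 ≤ (M:ℝ) - 1 := by
          have := mul_le_mul_of_nonneg_right (le_of_lt hρ2) (by linarith : (0:ℝ) ≤ C1)
          linarith
        have e2 : ρ * (M:ℝ) ≤ 2 * M := by
          have := mul_le_mul_of_nonneg_right (le_of_lt hρ2) hMnn
          linarith
        have hA : C1 * M' + ((M:ℝ) - M') ≤ (C1*((M:ℝ)+1) + M)/2 := by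
          have := mul_le_mul_of_nonneg_left h1 (by linarith : (0:ℝ) ≤ C1)
          linarith
        have hAρ : (C1 * M' + ((M:ℝ) - M')) * ρ ≤ ((C1*((M:ℝ)+1) + M)/2) * ρ := by
          apply mul_le_mul_of_nonneg_right hA (by linarith)
        have h4M : C1*(2-ρ)*(M:ℝ) = 4*M := by rw [hC1e]
        linarith [hAρ, e1, e2, h4M, hMnn]
      calc ∑ k ∈ Finset.range M, g k ≤ M0 + (C1 * M' + ((M:ℝ) - M')) * g M' := hcomb
      _ ≤ M0 + (C1 * M' + ((M:ℝ) - M')) * (ρ * g M) := by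
        apply add_le_add_right
        have hMM' : (M':ℝ) ≤ M := by exact_mod_cast le_of_lt hM'lt
        have hc10 : 0 ≤ C1 * (M':ℝ) := mul_nonneg (by linarith) hM'0
        apply mul_le_mul_of_nonneg_left hgM' (by linarith)
      _ = M0 + ((C1 * M' + ((M:ℝ) - M')) * ρ) * g M := by ring
      _ ≤ M0 + (C1 * M) * g M :=
        add_le_add_right (mul_le_mul_of_nonneg_right hcoef hgM0) _
      _ = M0 + C1 * M * g M := by ring
lemma mul_tendsto_atTop {g : ℝ → ℝ} {c X : ℝ} (hg : Antitone g) (hg0 : ∀ x, 0 ≤ g x)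
    (hc : 1/2 < c) (hX : 1 ≤ X) (hgX : 0 < g (2*X))
    (hpot : ∀ x, X ≤ x → c * g x ≤ g (2*x)) :
    Tendsto (fun x : ℝ => x * g x) atTop atTop := by
  set c0 : ℝ := X * g (2*X) with hc0def
  have hc00 : 0 < c0 := mul_pos (by linarith) hgX
  set σ : ℝ := 2*c with hσdef
  have hσ1 : 1 < σ := by rw [hσdef]; linarith
  have Q : ∀ j : ℕ, ∀ x : ℝ, 2^j * X ≤ x → x ≤ 2^(j+1) * X → σ^j * c0 ≤ x * g x := by
    intro j
    induction j with
    | zero =>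
      intro x h1 h2
      norm_num at h1 h2 ⊢
      calc c0 = X * g (2*X) := hc0def
      _ ≤ x * g x := by
        apply mul_le_mul h1 (hg h2) (le_of_lt hgX) (by linarith)
    | succ j ih =>
      intro x h1 h2
      rw [pow_succ] at h1
      rw [pow_succ (2:ℝ) (j+1)] at h2
      have hp : (1:ℝ) ≤ 2^j := one_le_pow₀ (by norm_num)
      have hpX : X ≤ 2^j * X := le_mul_of_one_le_left (by linarith) hp
      have hXx2 : X ≤ x/2 := by linarith
      have ihy : σ^j * c0 ≤ (x/2) * g (x/2) := ih (x/2) (by linarith) (by linarith)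
      have hgx : c * g (x/2) ≤ g x := by
        have := hpot (x/2) hXx2
        rwa [mul_div_cancel₀] at this
        norm_num
      have hx0 : 0 < x := by linarith
      calc σ^(j+1) * c0 = σ * (σ^j * c0) := by ring
      _ ≤ σ * ((x/2) * g (x/2)) := by
        apply mul_le_mul_of_nonneg_left ihy (by linarith)
      _ = x * (c * g (x/2)) := by rw [hσdef]; ring
      _ ≤ x * g x := mul_le_mul_of_nonneg_left hgx (le_of_lt hx0)
  rw [tendsto_atTop]
  intro b
  obtain ⟨j0, hj0⟩ := pow_unbounded_of_one_lt (b/c0) hσ1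
  have hbj0 : b ≤ σ^j0 * c0 := by
    rw [div_lt_iff₀ hc00] at hj0; linarith
  filter_upwards [eventually_ge_atTop ((2:ℝ)^j0 * X)] with x hx
  have hX0 : (0:ℝ) < X := by linarith
  have hx1 : 1 ≤ x / X := by
    rw [le_div_iff₀ hX0]
    calc (1:ℝ) * X = X := one_mul X
    _ ≤ 2^j0 * X := le_mul_of_one_le_left (by linarith) (one_le_pow₀ (by norm_num))
    _ ≤ x := hx
  obtain ⟨j, hj1, hj2⟩ := dyadic_exists hx1
  have hj1' : 2^j * X ≤ x := by rw [le_div_iff₀ hX0] at hj1; linarith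
  have hj2' : x ≤ 2^(j+1) * X := by rw [div_lt_iff₀ hX0] at hj2; linarith
  have hjj0 : j0 ≤ j := by
    by_contra hcon
    push_neg at hcon
    have : (2:ℝ)^j0 ≤ x / X := by rw [le_div_iff₀ hX0]; linarith
    have h4 : (2:ℝ)^j0 < 2^(j+1) := lt_of_le_of_lt this hj2
    have : j0 < j + 1 := by
      exact_mod_cast (pow_lt_pow_iff_right₀ (by norm_num : (1:ℝ) < 2)).mp h4
    omega
  calc b ≤ σ^j0 * c0 := hbj0
  _ ≤ σ^j * c0 := by
    apply mul_le_mul_of_nonneg_right (pow_le_pow_right₀ (le_of_lt hσ1) hjj0) (le_of_lt hc00)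
  _ ≤ x * g x := Q j x hj1' hj2'
lemma indicator_sum_min (M d : ℕ) :
    ∑ k ∈ Finset.range M, (if (k:ℝ) < (d:ℝ) then (1:ℝ≥0∞) else 0)
      = ((min d M : ℕ) : ℝ≥0∞) := by
  simp only [Nat.cast_lt]
  classical
  rw [Finset.sum_boole]
  congr 1
  have h : Finset.filter (fun k => k < d) (Finset.range M) = Finset.range (min d M) := by
    ext k
    simp only [Finset.mem_filter, Finset.mem_range, Nat.lt_min]
    omega
  rw [h, Finset.card_range]

lemma event_incl {Ω : Type*} (Dseq : ℕ → Ω → ℕ) (n : ℕ) (ε δun y : ℝ)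
    (hδun : 0 < δun) (hε : 0 < ε) :
    {ω | ε ≤ (∑ i ∈ Finset.range n, if (Dseq i ω:ℝ) ≤ y then (Dseq i ω:ℝ) else 0) /
          (∑ i ∈ Finset.range n, (Dseq i ω:ℝ))} ⊆
      (⋂ i ∈ Finset.range n, Dseq i ⁻¹' {d : ℕ | (d:ℝ) ≤ δun}) ∪
      {ω | ε * δun ≤ ∑ i ∈ Finset.range n,
          if (Dseq i ω:ℝ) ≤ y then (Dseq i ω:ℝ) else 0} := by
  intro ω hω
  simp only [Set.mem_setOf_eq] at hω
  by_cases hcase : ∀ i ∈ Finset.range n, (Dseq i ω : ℝ) ≤ δun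
  · left
    exact Set.mem_biInter (fun i hi => hcase i hi)
  · right
    push_neg at hcase
    obtain ⟨i, hi, hgt⟩ := hcase
    have hLge : δun < ∑ j ∈ Finset.range n, (Dseq j ω:ℝ) :=
      lt_of_lt_of_le hgt (Finset.single_le_sum (f := fun j => (Dseq j ω:ℝ))
        (fun j _ => Nat.cast_nonneg _) hi)
    have hL0 : 0 < ∑ j ∈ Finset.range n, (Dseq j ω:ℝ) := lt_trans hδun hLge
    have hK : ε * ∑ j ∈ Finset.range n, (Dseq j ω:ℝ)
        ≤ ∑ i ∈ Finset.range n, if (Dseq i ω:ℝ) ≤ y then (Dseq i ω:ℝ) else 0 :=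
      (le_div_iff₀ hL0).mp hω
    have : ε * δun ≤ ε * ∑ j ∈ Finset.range n, (Dseq j ω:ℝ) := by nlinarith
    exact Set.mem_setOf_eq ▸ le_trans this hK
lemma indep_prod_bound {Ω : Type*} [MeasureSpace Ω] [IsProbabilityMeasure (ℙ : Measure Ω)]
    (D : Ω → ℕ) (hDmeas : Measurable D) (Dseq : ℕ → Ω → ℕ)
    (hDseqmeas : ∀ i, Measurable (Dseq i))
    (hindep : iIndepFun Dseq ℙ)
    (hident : ∀ i, IdentDistrib (Dseq i) D ℙ ℙ) (n : ℕ) (b : ℝ) :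
    ℙ (⋂ i ∈ Finset.range n, Dseq i ⁻¹' {d : ℕ | (d:ℝ) ≤ b})
      = ENNReal.ofReal ((1 - (ℙ {ω | b < (D ω:ℝ)}).toReal)^n) := by
  have hmeasN : ∀ (s : Set ℕ), MeasurableSet s := fun s => trivial
  set s : Set ℕ := {d : ℕ | (d:ℝ) ≤ b} with hsdef
  have hprod := hindep.measure_inter_preimage_eq_mul (S := Finset.range n)
    (sets := fun _ => s) (fun i _ => hmeasN s)
  have hfac : ∀ i, ℙ (Dseq i ⁻¹' s) = ℙ (D ⁻¹' s) := by
    intro i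
    rw [← Measure.map_apply (hDseqmeas i) (hmeasN s), (hident i).map_eq,
      Measure.map_apply hDmeas (hmeasN s)]
  rw [hprod, Finset.prod_congr rfl (fun i _ => hfac i), Finset.prod_const, Finset.card_range]
  have hcompl : D ⁻¹' s = {ω | b < (D ω:ℝ)}ᶜ := by
    ext ω
    simp [hsdef, not_lt]
  have hmeasq : MeasurableSet {ω | b < (D ω:ℝ)} := by
    have h : {ω | b < (D ω:ℝ)} = D ⁻¹' {d : ℕ | b < (d:ℝ)} := rfl
    rw [h]; exact hDmeas (hmeasN _)
  set q : ℝ≥0∞ := ℙ {ω | b < (D ω:ℝ)} with hqdef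
  have hq1 : q ≤ 1 := prob_le_one
  have htos : ((1:ℝ≥0∞) - q).toReal = 1 - q.toReal := by
    rw [ENNReal.toReal_sub_of_le hq1 ENNReal.one_ne_top, ENNReal.toReal_one]
  have hne : (1:ℝ≥0∞) - q ≠ ⊤ := by
    intro hcon
    exact ENNReal.one_ne_top (eq_top_iff.2 (hcon ▸ tsub_le_self.trans_eq rfl) ▸ rfl)
  have heq : ℙ (D ⁻¹' s) = ENNReal.ofReal (1 - q.toReal) := by
    rw [hcompl, prob_compl_eq_one_sub hmeasq, ← htos, ENNReal.ofReal_toReal hne]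
  rw [heq, ← ENNReal.ofReal_pow (by
    simp only [sub_nonneg]
    exact ENNReal.toReal_le_of_le_ofReal one_pos.le (by simpa using hq1))]
lemma markov_bound {Ω : Type*} [MeasureSpace Ω] [IsProbabilityMeasure (ℙ : Measure Ω)]
    (D : Ω → ℕ) (hDmeas : Measurable D) (Dseq : ℕ → Ω → ℕ)
    (hDseqmeas : ∀ i, Measurable (Dseq i))
    (hident : ∀ i, IdentDistrib (Dseq i) D ℙ ℙ) (n : ℕ) (y a : ℝ) (ha : 0 < a) :
    ℙ {ω | a ≤ ∑ i ∈ Finset.range n, if (Dseq i ω:ℝ) ≤ y then (Dseq i ω:ℝ) else 0}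
      ≤ (n : ℝ≥0∞) * (∑ k ∈ Finset.range ⌈y⌉₊, ℙ {ω | (k:ℝ) < (D ω:ℝ)})
          / ENNReal.ofReal a := by
  have hmeasN : ∀ (s : Set ℕ), MeasurableSet s := fun s => trivial
  set M : ℕ := ⌈y⌉₊ with hMdef
  set φ : ℕ → ℝ≥0∞ := fun d => ENNReal.ofReal (if (d:ℝ) ≤ y then (d:ℝ) else 0) with hφdef
  have hφmeas : Measurable φ := measurable_from_top
  set F : Ω → ℝ≥0∞ := fun ω => ∑ i ∈ Finset.range n, φ (Dseq i ω) with hFdef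
  have hFmeas : Measurable F := by
    apply Finset.measurable_sum
    intro i _
    exact hφmeas.comp (hDseqmeas i)
  -- event identification
  have hev : {ω | a ≤ ∑ i ∈ Finset.range n,
      if (Dseq i ω:ℝ) ≤ y then (Dseq i ω:ℝ) else 0} = {ω | ENNReal.ofReal a ≤ F ω} := by
    ext ω
    have hnn : ∀ i ∈ Finset.range n,
        (0:ℝ) ≤ if (Dseq i ω:ℝ) ≤ y then (Dseq i ω:ℝ) else 0 := by
      intro i _
      split <;> positivity
    have hsum : F ω = ENNReal.ofReal (∑ i ∈ Finset.range n,
        if (Dseq i ω:ℝ) ≤ y then (Dseq i ω:ℝ) else 0) :=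
      (ENNReal.ofReal_sum_of_nonneg hnn).symm
    simp only [Set.mem_setOf_eq, hsum]
    rw [ENNReal.ofReal_le_ofReal_iff (Finset.sum_nonneg hnn)]
  rw [hev]
  -- Markov
  have hmarkov := meas_ge_le_lintegral_div (μ := ℙ) hFmeas.aemeasurable
    (ε := ENNReal.ofReal a) (by simp [ENNReal.ofReal_eq_zero, not_le, ha])
    ENNReal.ofReal_ne_top
  apply le_trans hmarkov
  apply ENNReal.div_le_div_right
  -- lintegral bound
  have hlin : ∫⁻ ω, F ω ∂ℙ = ∑ i ∈ Finset.range n, ∫⁻ ω, φ (Dseq i ω) ∂ℙ :=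
    lintegral_finset_sum _ (fun i _ => hφmeas.comp (hDseqmeas i))
  have hchg : ∀ i, ∫⁻ ω, φ (Dseq i ω) ∂ℙ = ∫⁻ ω, φ (D ω) ∂ℙ := by
    intro i
    rw [← lintegral_map hφmeas (hDseqmeas i), (hident i).map_eq,
      lintegral_map hφmeas hDmeas]
  have hφle : ∀ d : ℕ, φ d ≤ ∑ k ∈ Finset.range M,
      (if (k:ℝ) < (d:ℝ) then (1:ℝ≥0∞) else 0) := by
    intro d
    rw [indicator_sum_min M d, hφdef]
    by_cases hd : (d:ℝ) ≤ y
    · simp only [if_pos hd]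
      have hdM : d ≤ M := by
        have h1 : (d:ℝ) ≤ (M:ℝ) := le_trans hd (Nat.le_ceil y)
        exact_mod_cast h1
      rw [min_eq_left hdM, ENNReal.ofReal_natCast]
    · simp only [if_neg hd, ENNReal.ofReal_zero]
      exact zero_le
  have hDbound : ∫⁻ ω, φ (D ω) ∂ℙ ≤ ∑ k ∈ Finset.range M, ℙ {ω | (k:ℝ) < (D ω:ℝ)} := by
    calc ∫⁻ ω, φ (D ω) ∂ℙ
        ≤ ∫⁻ ω, ∑ k ∈ Finset.range M, (if (k:ℝ) < (D ω:ℝ) then (1:ℝ≥0∞) else 0) ∂ℙ :=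
          lintegral_mono (fun ω => hφle (D ω))
    _ = ∑ k ∈ Finset.range M, ∫⁻ ω, (if (k:ℝ) < (D ω:ℝ) then (1:ℝ≥0∞) else 0) ∂ℙ := by
      apply lintegral_finset_sum
      intro k _
      exact (measurable_from_top (f := fun d : ℕ => if (k:ℝ) < (d:ℝ) then (1:ℝ≥0∞) else 0)).comp hDmeas
    _ = ∑ k ∈ Finset.range M, ℙ {ω | (k:ℝ) < (D ω:ℝ)} := by
      apply Finset.sum_congr rfl
      intro k _
      have hind : (fun ω => if (k:ℝ) < (D ω:ℝ) then (1:ℝ≥0∞) else 0)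
          = Set.indicator {ω | (k:ℝ) < (D ω:ℝ)} (fun _ => 1) := by
        funext ω
        rw [Set.indicator_apply]
        simp [Set.mem_setOf_eq]
      rw [hind]
      have hms : MeasurableSet {ω | (k:ℝ) < (D ω:ℝ)} := by
        have h : {ω | (k:ℝ) < (D ω:ℝ)} = D ⁻¹' {d : ℕ | (k:ℝ) < (d:ℝ)} := rfl
        rw [h]; exact hDmeas (hmeasN _)
      exact lintegral_indicator_one hms
  calc ∫⁻ ω, F ω ∂ℙ = ∑ i ∈ Finset.range n, ∫⁻ ω, φ (D ω) ∂ℙ := by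
        rw [hlin]; exact Finset.sum_congr rfl (fun i _ => hchg i)
  _ = (n : ℝ≥0∞) * ∫⁻ ω, φ (D ω) ∂ℙ := by
        rw [Finset.sum_const, Finset.card_range, nsmul_eq_mul]
  _ ≤ (n : ℝ≥0∞) * (∑ k ∈ Finset.range M, ℙ {ω | (k:ℝ) < (D ω:ℝ)}) :=
    mul_le_mul_right hDbound _
end Aux

set_option maxHeartbeats 1600000 in
/-- With `D` power-law with exponent `τ ∈ (1,2)` and slowly varying `ℓ`,
`(Dseq i)` i.i.d. copies of `D`, `u_n > 0` with `n(1 - F(u_n)) → 1`, and `ε_n > 0` with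
`ε_n → 0`, the total degree of the non-giants `K_n = Σ_{i<n} Dseq i · 1{Dseq i ≤ ε_n u_n}`
satisfies `K_n / L_n → 0` in probability, where `L_n = Σ_{i<n} Dseq i`. -/
theorem stmt8
    {Ω : Type*} [MeasureSpace Ω] [IsProbabilityMeasure (ℙ : Measure Ω)]
    (D : Ω → ℕ) (hDmeas : Measurable D) (hDpos : ∀ ω, 1 ≤ D ω)
    (τ : ℝ) (hτ : τ ∈ Set.Ioo (1 : ℝ) 2)
    (ℓ : ℝ → ℝ) (hℓ : SlowlyVarying ℓ)
    (hpow : ∀ x ≥ (1 : ℝ), (ℙ {ω | x < (D ω : ℝ)}).toReal = ℓ x * x ^ (-(τ - 1)))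
    (Dseq : ℕ → Ω → ℕ) (hDseqmeas : ∀ i, Measurable (Dseq i))
    (hindep : iIndepFun Dseq ℙ)
    (hident : ∀ i, IdentDistrib (Dseq i) D ℙ ℙ)
    (u : ℕ → ℝ) (hupos : ∀ n, 0 < u n)
    (hu : Tendsto (fun n : ℕ => (n : ℝ) * (ℙ {ω | u n < (D ω : ℝ)}).toReal)
      atTop (nhds 1))
    (εseq : ℕ → ℝ) (hεpos : ∀ n, 0 < εseq n) (hεlim : Tendsto εseq atTop (nhds 0)) :
    ∀ ε > (0 : ℝ),
      Tendsto
        (fun n : ℕ =>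
          ℙ {ω | ε ≤
              (∑ i ∈ Finset.range n,
                  if (Dseq i ω : ℝ) ≤ εseq n * u n then (Dseq i ω : ℝ) else 0) /
                (∑ i ∈ Finset.range n, (Dseq i ω : ℝ))})
        atTop (nhds 0) := by
  intro ε hε
  obtain ⟨hτ1, hτ2⟩ := hτ
  -- the tail function
  set g : ℝ → ℝ := fun x => (ℙ {ω | x < (D ω : ℝ)}).toReal with hgdef
  have hpow' : ∀ x ≥ (1:ℝ), g x = ℓ x * x ^ (-(τ - 1)) := hpow
  have hu' : Tendsto (fun n : ℕ => (n : ℝ) * g (u n)) atTop (nhds 1) := hu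
  have hganti : Antitone g := by
    intro a b hab
    exact ENNReal.toReal_mono (measure_ne_top _ _)
      (measure_mono (fun ω hω => lt_of_le_of_lt hab hω))
  have hg0 : ∀ x, 0 ≤ g x := fun x => ENNReal.toReal_nonneg
  have hg1 : ∀ x, g x ≤ 1 := by
    intro x
    rw [hgdef]
    exact ENNReal.toReal_le_of_le_ofReal one_pos.le (by simpa using prob_le_one)
  -- ratio limits
  have hratio : ∀ c : ℝ, 0 < c →
      Tendsto (fun x => g (c*x) / g x) atTop (nhds (c ^ (-(τ-1)))) := by
    intro c hc
    have h1 : Tendsto (fun x => (ℓ (c*x) / ℓ x) * c ^ (-(τ-1))) atTop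
        (nhds (1 * c ^ (-(τ-1)))) := (hℓ.2 c hc).mul_const _
    rw [one_mul] at h1
    apply h1.congr'
    filter_upwards [hℓ.1, eventually_ge_atTop 1, eventually_ge_atTop (1/c)]
      with x hx1 hx2 hx3
    have hx0 : 0 < x := lt_of_lt_of_le one_pos hx2
    have hcx : 1 ≤ c * x := by
      rw [div_le_iff₀ hc] at hx3
      nlinarith
    rw [hpow' x hx2, hpow' (c*x) hcx, Real.mul_rpow (le_of_lt hc) (le_of_lt hx0)]
    have hxne : x ^ (-(τ-1)) ≠ 0 := ne_of_gt (Real.rpow_pos_of_pos hx0 _)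
    have hℓne : ℓ x ≠ 0 := ne_of_gt hx1
    field_simp
  have hgpos : ∀ᶠ x in atTop, 0 < g x := by
    filter_upwards [hℓ.1, eventually_ge_atTop 1] with x hx1 hx2
    rw [hpow' x hx2]
    exact mul_pos hx1 (Real.rpow_pos_of_pos (by linarith) _)
  -- the doubling constant
  set γ : ℝ := (2:ℝ) ^ (-(τ-1)) with hγdef
  have hγa : 1/2 < γ := by
    have : (2:ℝ) ^ (-1:ℝ) < (2:ℝ) ^ (-(τ-1)) := by
      apply Real.rpow_lt_rpow_left_iff (by norm_num : (1:ℝ) < 2) |>.2 (by linarith)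
    rwa [Real.rpow_neg_one, show ((2:ℝ)⁻¹ = 1/2) by norm_num] at this
  have hγb : γ < 1 := by
    have : (2:ℝ) ^ (-(τ-1)) < (2:ℝ) ^ (0:ℝ) := by
      apply Real.rpow_lt_rpow_left_iff (by norm_num : (1:ℝ) < 2) |>.2 (by linarith)
    rwa [Real.rpow_zero] at this
  set cc : ℝ := (1/2 + γ)/2 with hccdef
  have hcc1 : 1/2 < cc := by rw [hccdef]; linarith
  have hcc2 : cc < γ := by rw [hccdef]; linarith
  have hcc0 : 0 < cc := by linarith
  have hcc3 : cc < 1 := by linarith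
  -- doubling property eventually
  have hev : ∃ X : ℝ, 1 ≤ X ∧ (∀ x, X ≤ x → 0 < g x) ∧
      (∀ x, X ≤ x → cc * g x ≤ g (2*x)) := by
    have h2 : ∀ᶠ x in atTop, cc < g (2*x) / g x :=
      (hratio 2 two_pos).eventually_const_lt hcc2
    have h3 := (h2.and hgpos).exists_forall_of_atTop
    obtain ⟨X0, hX0⟩ := h3
    refine ⟨max X0 1, le_max_right _ _, ?_, ?_⟩
    · intro x hx
      exact (hX0 x (le_trans (le_max_left _ _) hx)).2
    · intro x hx
      obtain ⟨ha, hb⟩ := hX0 x (le_trans (le_max_left _ _) hx)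
      rw [lt_div_iff₀ hb] at ha
      linarith
  obtain ⟨X, hX, hgXpos, hpotc⟩ := hev
  set ρ : ℝ := cc⁻¹ with hρdef
  have hρ1 : 1 ≤ ρ := by
    rw [hρdef]
    exact one_le_inv_iff₀.2 ⟨hcc0, le_of_lt hcc3⟩
  have hρ2 : ρ < 2 := by
    rw [hρdef, show (2:ℝ) = (2⁻¹)⁻¹ by norm_num]
    exact inv_strictAnti₀ (by norm_num) (by rw [show ((2:ℝ)⁻¹ = 1/2) by norm_num]; exact hcc1)
  have hpot' : ∀ x, X ≤ x → g x ≤ ρ * g (2*x) := by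
    intro x hx
    have h := hpotc x hx
    calc g x = cc⁻¹ * (cc * g x) := by field_simp
    _ ≤ cc⁻¹ * g (2*x) := mul_le_mul_of_nonneg_left h (inv_nonneg.2 (le_of_lt hcc0))
  set β : ℝ := Real.logb 2 ρ with hβdef
  have hβ0 : 0 ≤ β := Real.logb_nonneg (by norm_num) hρ1
  have hβ1 : β < 1 := by
    have h1 : Real.logb 2 ρ < Real.logb 2 2 :=
      Real.logb_lt_logb (by norm_num) (by linarith) hρ2
    rw [Real.logb_self_eq_one (by norm_num)] at h1
    exact h1
  obtain ⟨C0, C1, hC00, hC10, hSS⟩ := sum_bound hganti hg0 hg1 hρ1 hρ2 hX hpot'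
  have hrb := ratio_bound hganti hg0 hρ1 hX hpot'
  -- u n → ∞
  have hgu0 : Tendsto (fun n : ℕ => g (u n)) atTop (nhds 0) := by
    have h1 : Tendsto (fun n : ℕ => ((n:ℝ) * g (u n)) * (n:ℝ)⁻¹) atTop (nhds (1 * 0)) :=
      hu'.mul tendsto_inv_atTop_nhds_zero_nat
    rw [one_mul] at h1
    apply h1.congr'
    filter_upwards [eventually_ge_atTop 1] with n hn
    have : (n:ℝ) ≠ 0 := by positivity
    field_simp
  have huinf : Tendsto u atTop atTop := by
    rw [tendsto_atTop]
    intro A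
    have hpos : 0 < g (max A X) := hgXpos _ (le_max_right _ _)
    filter_upwards [hgu0.eventually_lt_const hpos] with n hn
    by_contra hcon
    push_neg at hcon
    exact absurd (hganti (le_of_lt (lt_of_lt_of_le hcon (le_max_left A X)))) (not_le.2 hn)
  have hugu : Tendsto (fun n : ℕ => u n * g (u n)) atTop atTop :=
    (mul_tendsto_atTop hganti hg0 hcc1 hX (hgXpos _ (by linarith)) hpotc).comp huinf
  -- core real-analytic estimate
  have hcore : Tendsto
      (fun n : ℕ => (n:ℝ) * (∑ k ∈ Finset.range ⌈εseq n * u n⌉₊, g k) / u n)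
      atTop (nhds 0) := by
    set A0 : ℝ := C0 + X + 1 with hA0def
    set A1 : ℝ := 2*C1*ρ with hA1def
    have hA00 : 0 ≤ A0 := by rw [hA0def]; linarith
    have hA10 : 0 ≤ A1 := by rw [hA1def]; positivity
    have hρ0 : (0:ℝ) < ρ := by linarith
    have hR : Tendsto (fun n : ℕ =>
        ((n:ℝ) * g (u n)) * (A0 * (u n * g (u n))⁻¹ + A1 * (εseq n) ^ (1-β)))
        atTop (nhds (1 * (A0 * 0 + A1 * 0))) := by
      apply Tendsto.mul hu'
      apply Tendsto.add
      · exact Tendsto.const_mul _ hugu.inv_tendsto_atTop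
      · apply Tendsto.const_mul
        have hcont : Tendsto (fun n : ℕ => (εseq n) ^ (1-β)) atTop
            (nhds ((0:ℝ) ^ (1-β))) :=
          ((Real.continuousAt_rpow_const 0 (1-β) (Or.inr (by linarith))).tendsto).comp hεlim
        rwa [Real.zero_rpow (by linarith : (1:ℝ)-β ≠ 0)] at hcont
    have hlim0 : (1:ℝ) * (A0 * 0 + A1 * 0) = 0 := by ring
    rw [hlim0] at hR
    apply squeeze_zero' ?_ ?_ hR
    · filter_upwards [] with n
      have h1 : (0:ℝ) ≤ ∑ k ∈ Finset.range ⌈εseq n * u n⌉₊, g k :=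
        Finset.sum_nonneg (fun k _ => hg0 k)
      exact div_nonneg (mul_nonneg (Nat.cast_nonneg n) h1) (le_of_lt (hupos n))
    · filter_upwards [huinf.eventually_ge_atTop X,
        hεlim.eventually_lt_const (by norm_num : (0:ℝ) < 1)] with n hn1 hn2
      have hun0 : 0 < u n := hupos n
      have hgun : 0 < g (u n) := hgXpos _ hn1
      have hεn : 0 < εseq n := hεpos n
      set y : ℝ := εseq n * u n with hydef
      have hy0 : 0 < y := by positivity
      set M : ℕ := ⌈y⌉₊ with hMdef
      have hyM : y ≤ M := Nat.le_ceil y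
      have hεβ : 0 ≤ (εseq n) ^ (1-β) := Real.rpow_nonneg (le_of_lt hεn) _
      have hbase : ∑ k ∈ Finset.range M, g k ≤ A0 + A1 * (εseq n) ^ (1-β) * (u n * g (u n)) := by
        by_cases hcase : y < X
        · have hM1 : (M:ℝ) ≤ X + 1 := by
            have := Nat.ceil_lt_add_one (le_of_lt hy0)
            linarith [hyM, this]
          have : ∑ k ∈ Finset.range M, g k ≤ (M:ℝ) := by
            calc ∑ k ∈ Finset.range M, g k ≤ ∑ k ∈ Finset.range M, 1 :=
              Finset.sum_le_sum (fun k _ => hg1 k)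
            _ = (M:ℝ) := by simp
          have hrest : 0 ≤ A1 * (εseq n) ^ (1-β) * (u n * g (u n)) := by positivity
          rw [hA0def]
          linarith
        · push_neg at hcase
          have hyu : y ≤ u n := by
            rw [hydef]
            nlinarith
          have hMy : (M:ℝ) ≤ 2*y := by
            have := Nat.ceil_lt_add_one (le_of_lt hy0)
            have hy1 : 1 ≤ y := le_trans hX hcase
            linarith
          have hgM : g M ≤ ρ * (u n / y) ^ β * g (u n) := by
            calc g (M:ℝ) ≤ g y := hganti hyM
            _ ≤ ρ * (u n / y) ^ β * g (u n) := hrb y (u n) hcase hyu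
          have huy : u n / y = (εseq n)⁻¹ := by
            rw [hydef]
            field_simp
          have hεid : εseq n * ((εseq n)⁻¹) ^ β = (εseq n) ^ (1-β) := by
            rw [Real.inv_rpow (le_of_lt hεn), ← Real.rpow_neg (le_of_lt hεn)]
            nth_rewrite 1 [← Real.rpow_one (εseq n)]
            rw [← Real.rpow_add hεn]
            ring_nf
          have hkey : C1 * M * g M ≤ A1 * (εseq n) ^ (1-β) * (u n * g (u n)) := by
            have h0M : (0:ℝ) ≤ M := Nat.cast_nonneg M
            have hgM0 : 0 ≤ g (M:ℝ) := hg0 _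
            have hβnn : 0 ≤ ρ * (u n / y) ^ β * g (u n) := by
              have := Real.rpow_nonneg (by positivity : (0:ℝ) ≤ u n / y) β
              positivity
            have hstep1 : C1 * (M:ℝ) ≤ C1 * (2*y) := mul_le_mul_of_nonneg_left hMy hC10
            have hstep2 : (0:ℝ) ≤ C1 * (2*y) := mul_nonneg hC10 (by linarith)
            calc C1 * M * g M ≤ C1 * (2*y) * (ρ * (u n / y) ^ β * g (u n)) :=
              mul_le_mul hstep1 hgM hgM0 hstep2
            _ = A1 * (εseq n * ((εseq n)⁻¹) ^ β) * (u n * g (u n)) := by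
              rw [huy, hA1def, hydef]
              ring
            _ = A1 * (εseq n) ^ (1-β) * (u n * g (u n)) := by rw [hεid]
          calc ∑ k ∈ Finset.range M, g k ≤ C0 + C1 * M * g M := hSS M
          _ ≤ A0 + A1 * (εseq n) ^ (1-β) * (u n * g (u n)) := by
            rw [hA0def]
            linarith
      -- divide by u n
      have hgoal : (n:ℝ) * (∑ k ∈ Finset.range M, g k) / u n
          ≤ ((n:ℝ) * g (u n)) * (A0 * (u n * g (u n))⁻¹ + A1 * (εseq n) ^ (1-β)) := by
        rw [div_le_iff₀ hun0]
        have hnn : (0:ℝ) ≤ (n:ℝ) := Nat.cast_nonneg n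
        have h2 := mul_le_mul_of_nonneg_left hbase hnn
        calc (n:ℝ) * (∑ k ∈ Finset.range M, g k)
            ≤ (n:ℝ) * (A0 + A1 * (εseq n) ^ (1-β) * (u n * g (u n))) := h2
        _ = ((n:ℝ) * g (u n)) * (A0 * (u n * g (u n))⁻¹ + A1 * (εseq n) ^ (1-β)) * u n := by
          field_simp
      exact hgoal
  have key : ∀ r : ℝ, 0 < r → ∀ᶠ n in atTop,
      ℙ {ω | ε ≤ (∑ i ∈ Finset.range n,
          if (Dseq i ω : ℝ) ≤ εseq n * u n then (Dseq i ω : ℝ) else 0) /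
          (∑ i ∈ Finset.range n, (Dseq i ω : ℝ))} ≤ ENNReal.ofReal r := by
    intro r hr
    have hT : Tendsto (fun k : ℕ => ((k:ℝ)+1) ^ (τ-1)) atTop atTop :=
      (tendsto_rpow_atTop (by linarith : (0:ℝ) < τ-1)).comp
        (tendsto_atTop_add_const_right atTop 1 tendsto_natCast_atTop_atTop)
    obtain ⟨k0, hk0⟩ := (hT.eventually_ge_atTop (2*Real.log (2/r))).exists
    set δ : ℝ := ((k0:ℝ)+1)⁻¹ with hδdef
    have hδ0 : 0 < δ := by positivity
    have hδT : δ ^ (-(τ-1)) = ((k0:ℝ)+1) ^ (τ-1) := by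
      rw [hδdef, Real.inv_rpow (by positivity), ← Real.rpow_neg (by positivity), neg_neg]
    set T : ℝ := ((k0:ℝ)+1) ^ (τ-1) with hTdef
    have hT0 : 0 < T := Real.rpow_pos_of_pos (by positivity) _
    have hexp : Real.exp (-(T/2)) ≤ r/2 := by
      have h2r : (0:ℝ) < 2/r := by positivity
      calc Real.exp (-(T/2)) ≤ Real.exp (-(Real.log (2/r))) :=
            Real.exp_le_exp.2 (by linarith)
      _ = r/2 := by rw [Real.exp_neg, Real.exp_log h2r, inv_div]
    have hδr : Tendsto (fun n : ℕ => (n:ℝ) * g (δ * u n)) atTop (nhds T) := by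
      have hratioδ : Tendsto (fun n : ℕ => g (δ * u n) / g (u n)) atTop
          (nhds (δ ^ (-(τ-1)))) := (hratio δ hδ0).comp huinf
      rw [hδT] at hratioδ
      have h1 : Tendsto (fun n : ℕ => ((n:ℝ) * g (u n)) * (g (δ * u n) / g (u n)))
          atTop (nhds (1 * T)) := hu'.mul hratioδ
      rw [one_mul] at h1
      apply h1.congr'
      filter_upwards [huinf.eventually_ge_atTop X] with n hn
      have hgn : g (u n) ≠ 0 := ne_of_gt (hgXpos _ hn)
      rw [mul_div_assoc', div_eq_iff hgn]
      ring
    have hAbd : ∀ᶠ n in atTop,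
        ℙ (⋂ i ∈ Finset.range n, Dseq i ⁻¹' {d : ℕ | (d:ℝ) ≤ δ * u n})
          ≤ ENNReal.ofReal (r/2) := by
      filter_upwards [hδr.eventually_const_lt (by linarith : T/2 < T)] with n hn
      rw [indep_prod_bound D hDmeas Dseq hDseqmeas hindep hident n (δ * u n)]
      have hgr : (ℙ {ω | δ * u n < (D ω:ℝ)}).toReal = g (δ * u n) := rfl
      rw [hgr]
      apply ENNReal.ofReal_le_ofReal
      have hqr1 : g (δ * u n) ≤ 1 := hg1 _
      have hqr0 : 0 ≤ g (δ * u n) := hg0 _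
      calc (1 - g (δ * u n))^n ≤ (Real.exp (-(g (δ * u n))))^n :=
            pow_le_pow_left₀ (by linarith)
              (by linarith [Real.add_one_le_exp (-(g (δ * u n)))]) n
      _ = Real.exp ((n:ℝ) * (-(g (δ * u n)))) := (Real.exp_nat_mul _ n).symm
      _ ≤ Real.exp (-(T/2)) := Real.exp_le_exp.2 (by nlinarith)
      _ ≤ r/2 := hexp
    have hεδ0 : 0 < ε * δ := mul_pos hε hδ0
    have hBbd : ∀ᶠ n in atTop,
        ℙ {ω | ε * (δ * u n) ≤ ∑ i ∈ Finset.range n,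
            if (Dseq i ω:ℝ) ≤ εseq n * u n then (Dseq i ω:ℝ) else 0}
          ≤ ENNReal.ofReal (r/2) := by
      filter_upwards [hcore.eventually_lt_const (by positivity : (0:ℝ) < r/2*(ε*δ))]
        with n hn
      have hun0 : 0 < u n := hupos n
      have ha0 : 0 < ε * (δ * u n) := by positivity
      apply le_trans (markov_bound D hDmeas Dseq hDseqmeas hident n (εseq n * u n)
        (ε * (δ * u n)) ha0)
      have hSnn : ∀ k ∈ Finset.range ⌈εseq n * u n⌉₊, (0:ℝ) ≤ g k := fun k _ => hg0 k
      have hsum : ∑ k ∈ Finset.range ⌈εseq n * u n⌉₊, ℙ {ω | (k:ℝ) < (D ω:ℝ)}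
          = ENNReal.ofReal (∑ k ∈ Finset.range ⌈εseq n * u n⌉₊, g k) := by
        rw [ENNReal.ofReal_sum_of_nonneg hSnn]
        apply Finset.sum_congr rfl
        intro k _
        exact (ENNReal.ofReal_toReal (measure_ne_top _ _)).symm
      rw [hsum]
      have hmul : (n:ℝ≥0∞) * ENNReal.ofReal (∑ k ∈ Finset.range ⌈εseq n * u n⌉₊, g k)
          = ENNReal.ofReal ((n:ℝ) * ∑ k ∈ Finset.range ⌈εseq n * u n⌉₊, g k) := by
        rw [ENNReal.ofReal_mul (Nat.cast_nonneg n), ENNReal.ofReal_natCast]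
      rw [hmul, ← ENNReal.ofReal_div_of_pos ha0]
      apply ENNReal.ofReal_le_ofReal
      rw [div_le_iff₀ ha0]
      have hn' : (n:ℝ) * (∑ k ∈ Finset.range ⌈εseq n * u n⌉₊, g k) / u n ≤ r/2*(ε*δ) :=
        le_of_lt hn
      rw [div_le_iff₀ hun0] at hn'
      calc (n:ℝ) * ∑ k ∈ Finset.range ⌈εseq n * u n⌉₊, g k ≤ r/2*(ε*δ) * u n := hn'
      _ = r/2 * (ε * (δ * u n)) := by ring
    filter_upwards [hAbd, hBbd] with n hA hB
    have hincl := event_incl Dseq n ε (δ * u n) (εseq n * u n)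
      (mul_pos hδ0 (hupos n)) hε
    calc ℙ {ω | ε ≤ (∑ i ∈ Finset.range n,
            if (Dseq i ω : ℝ) ≤ εseq n * u n then (Dseq i ω : ℝ) else 0) /
            (∑ i ∈ Finset.range n, (Dseq i ω : ℝ))}
        ≤ ℙ ((⋂ i ∈ Finset.range n, Dseq i ⁻¹' {d : ℕ | (d:ℝ) ≤ δ * u n}) ∪
            {ω | ε * (δ * u n) ≤ ∑ i ∈ Finset.range n,
              if (Dseq i ω:ℝ) ≤ εseq n * u n then (Dseq i ω:ℝ) else 0}) :=
          measure_mono hincl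
    _ ≤ ℙ (⋂ i ∈ Finset.range n, Dseq i ⁻¹' {d : ℕ | (d:ℝ) ≤ δ * u n}) +
          ℙ {ω | ε * (δ * u n) ≤ ∑ i ∈ Finset.range n,
            if (Dseq i ω:ℝ) ≤ εseq n * u n then (Dseq i ω:ℝ) else 0} :=
          measure_union_le _ _
    _ ≤ ENNReal.ofReal (r/2) + ENNReal.ofReal (r/2) := add_le_add hA hB
    _ = ENNReal.ofReal r := by
          rw [← ENNReal.ofReal_add (by linarith) (by linarith)]
          norm_num
  rw [ENNReal.tendsto_atTop_zero]
  intro η hη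
  have hmne : min 1 η ≠ ⊤ := ne_top_of_le_ne_top ENNReal.one_ne_top (min_le_left _ _)
  have hm0 : min 1 η ≠ 0 := (lt_min one_pos hη).ne'
  have hpos : 0 < (min 1 η).toReal := ENNReal.toReal_pos hm0 hmne
  obtain ⟨N, hN⟩ := (key ((min 1 η).toReal) hpos).exists_forall_of_atTop
  refine ⟨N, fun n hn => ?_⟩
  refine le_trans (hN n hn) ?_
  rw [ENNReal.ofReal_toReal hmne]
  exact min_le_right _ _
end

section
/- Let D satisfy the power-law assumption with exponent τ ∈ (1,2) and slowly varying function ℓ, fix 0 < α < 1/(τ−1), and let (ε_n) be a sequence of positive reals with ε_n → 0. Let (D_i(n))_{i=1}^n be i.i.d. copies of D(n), the variable D conditioned to be at most n^α. Then for every γ with 0 < γ < 1 − α(τ−1), P(#{i ≤ n : D_i(n) > ε_n n^α} ≥ n^γ) → 1 as n → ∞; that is, with high probability the number of giant-degree vertices in the conditioned model is at least n^γ. -/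
open MeasureTheory ProbabilityTheory Filter

lemma dyadic_lower (g : ℝ → ℝ) (x0 : ℝ) (hx0 : 1 ≤ x0)
    (hmono : ∀ x y : ℝ, x0 ≤ x → x ≤ y → g y ≤ g x)
    (hg0 : 0 < g x0) (s : ℝ) (hs : 0 ≤ s)
    (hstep : ∀ x ≥ x0, (2:ℝ) ^ (-s) * g x ≤ g (2 * x)) :
    ∃ c > 0, ∀ x ≥ x0, c * x ^ (-s) ≤ g x := by
  have hx0pos : (0:ℝ) < x0 := lt_of_lt_of_le one_pos hx0
  -- dyadic induction
  have hdy : ∀ k : ℕ, g x0 * ((2:ℝ) ^ (-s)) ^ k ≤ g (2 ^ k * x0) := by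
    intro k
    induction k with
    | zero => simp
    | succ k ih =>
      have h1 : x0 ≤ 2 ^ k * x0 := le_mul_of_one_le_left hx0pos.le (one_le_pow₀ one_le_two)
      have h2 := hstep _ h1
      have hr : (0:ℝ) < (2:ℝ) ^ (-s) := Real.rpow_pos_of_pos two_pos _
      calc g x0 * ((2:ℝ) ^ (-s)) ^ (k+1) = (2:ℝ) ^ (-s) * (g x0 * ((2:ℝ) ^ (-s)) ^ k) := by ring
        _ ≤ (2:ℝ) ^ (-s) * g (2 ^ k * x0) := by
            exact mul_le_mul_of_nonneg_left ih hr.le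
        _ ≤ g (2 * (2 ^ k * x0)) := h2
        _ = g (2 ^ (k+1) * x0) := by ring_nf
  refine ⟨g x0 * (4 / x0) ^ (-s), by positivity, fun x hx => ?_⟩
  set t : ℝ := x / x0 with ht
  have hxpos : (0:ℝ) < x := lt_of_lt_of_le hx0pos hx
  have ht1 : (1:ℝ) ≤ t := (one_le_div hx0pos).2 hx
  set m : ℕ := ⌈t⌉₊ with hm
  set k : ℕ := Nat.clog 2 m with hk
  have hm1 : 1 ≤ m := Nat.one_le_ceil_iff.2 (lt_of_lt_of_le one_pos ht1)
  have htm : t ≤ (m:ℝ) := Nat.le_ceil t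
  have hm2k : (m:ℝ) ≤ 2 ^ k := by exact_mod_cast Nat.le_pow_clog one_lt_two m
  have h2k4t : (2:ℝ) ^ k ≤ 4 * t := by
    rcases eq_or_lt_of_le hm1 with h1 | h2
    · have : k = 0 := by rw [hk, ← h1]; simp
      rw [this]; simpa using by linarith
    · have hk1 : 1 ≤ k := Nat.clog_pos one_lt_two h2
      have hlt : (2:ℕ) ^ (k - 1) < m := Nat.pow_pred_clog_lt_self one_lt_two h2
      have hlt' : (2:ℝ) ^ (k-1) < (m:ℝ) := by exact_mod_cast hlt
      have hme : (m:ℝ) < t + 1 := Nat.ceil_lt_add_one (by linarith)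
      have h2k : (2:ℝ) ^ k = 2 * 2 ^ (k-1) := by
        rw [← pow_succ']
        congr 1
        omega
      nlinarith
  -- x ≤ 2^k * x0
  have hxle : x ≤ 2 ^ k * x0 := by
    have : t ≤ 2 ^ k := le_trans htm hm2k
    calc x = t * x0 := by rw [ht, div_mul_cancel₀ x hx0pos.ne']
      _ ≤ 2 ^ k * x0 := mul_le_mul_of_nonneg_right this hx0pos.le
  have h1 : g x ≥ g (2 ^ k * x0) := hmono x _ hx hxle
  have h2 := hdy k
  have hrk : ((2:ℝ) ^ (-s)) ^ k = ((2:ℝ) ^ k) ^ (-s) := by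
    rw [← Real.rpow_natCast ((2:ℝ) ^ (-s)) k, ← Real.rpow_mul (by norm_num),
      ← Real.rpow_natCast (2:ℝ) k, ← Real.rpow_mul (by norm_num)]
    ring_nf
  have h4t : ((2:ℝ) ^ k) ^ (-s) ≥ (4 * t) ^ (-s) :=
    Real.rpow_le_rpow_of_nonpos (by positivity) h2k4t (by linarith)
  have hsplit : (4 * t) ^ (-s) = (4 / x0) ^ (-s) * x ^ (-s) := by
    rw [← Real.mul_rpow (by positivity) hxpos.le]
    congr 1
    field_simp [ht]
    rw [ht, div_mul_cancel₀ x hx0pos.ne']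
  calc g x0 * (4 / x0) ^ (-s) * x ^ (-s) = g x0 * ((4/x0) ^ (-s) * x ^ (-s)) := by ring
    _ = g x0 * (4*t) ^ (-s) := by rw [hsplit]
    _ ≤ g x0 * ((2:ℝ) ^ k) ^ (-s) := mul_le_mul_of_nonneg_left h4t hg0.le
    _ = g x0 * ((2:ℝ) ^ (-s)) ^ k := by rw [hrk]
    _ ≤ g (2 ^ k * x0) := h2
    _ ≤ g x := h1


lemma key_bound (G ℓ : ℝ → ℝ) (hℓ : SlowlyVarying ℓ) (β : ℝ) (hβ0 : 0 < β)
    (hmono : ∀ x y : ℝ, x ≤ y → G y ≤ G x)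
    (hpow : ∀ x ≥ (1:ℝ), G x = ℓ x * x ^ (-β)) (s : ℝ) (hsβ : β < s) :
    ∃ c > 0, ∀ᶠ x : ℝ in atTop, c * x ^ (-s) ≤ G (x/2) - G x := by
  obtain ⟨hpos, hratio⟩ := hℓ
  have h2β : (0:ℝ) < (2:ℝ)^(-β) := Real.rpow_pos_of_pos two_pos _
  have h2βlt : (2:ℝ)^(-β) < 1 :=
    Real.rpow_lt_one_of_one_lt_of_neg one_lt_two (by linarith)
  set θ : ℝ := (1 + (2:ℝ)^(-β))/2 with hθ
  have hθ1 : θ < 1 := by rw [hθ]; linarith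
  have hθ0 : 0 < θ := by rw [hθ]; linarith
  -- ratio at 1/2
  have hhalf : ∀ᶠ x in atTop, θ ≤ ℓ (x/2) / ℓ x := by
    have := (hratio (1/2) (by norm_num)).eventually (eventually_ge_nhds hθ1)
    filter_upwards [this] with x hx
    have h : (1:ℝ)/2 * x = x/2 := by ring
    rwa [h] at hx
  -- ratio at 2
  set ρ : ℝ := (2:ℝ)^(-(s-β)) with hρ
  have hρ0 : 0 < ρ := Real.rpow_pos_of_pos two_pos _
  have hρ1 : ρ < 1 := Real.rpow_lt_one_of_one_lt_of_neg one_lt_two (by linarith)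
  have hdouble : ∀ᶠ x in atTop, ρ ≤ ℓ (2*x) / ℓ x :=
    (hratio 2 two_pos).eventually (eventually_ge_nhds hρ1)
  -- step inequality for G
  have hstepG : ∀ᶠ x in atTop, (2:ℝ)^(-s) * G x ≤ G (2*x) := by
    filter_upwards [hdouble, hpos, eventually_ge_atTop (1:ℝ)] with x hd hp hx1
    have hx0 : (0:ℝ) < x := by linarith
    have hℓ2 : ρ * ℓ x ≤ ℓ (2*x) := by
      rw [le_div_iff₀ hp] at hd; linarith
    have h2x1 : (1:ℝ) ≤ 2*x := by linarith
    rw [hpow x hx1, hpow (2*x) h2x1]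
    have hrw : ((2:ℝ)*x) ^ (-β) = (2:ℝ)^(-β) * x^(-β) :=
      Real.mul_rpow (by norm_num) hx0.le
    have h2s : (2:ℝ)^(-s) = ρ * (2:ℝ)^(-β) := by
      rw [hρ, ← Real.rpow_add two_pos]; ring_nf
    calc (2:ℝ)^(-s) * (ℓ x * x^(-β)) = (ρ * ℓ x) * ((2:ℝ)^(-β) * x^(-β)) := by
          rw [h2s]; ring
      _ ≤ ℓ (2*x) * ((2:ℝ)^(-β) * x^(-β)) :=
          mul_le_mul_of_nonneg_right hℓ2 (by positivity)
      _ = ℓ (2*x) * ((2*x)^(-β)) := by rw [hrw]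
  -- difference inequality eventually: G(x/2) - G x ≥ c2 * G x
  have h2βgt : (1:ℝ) < (2:ℝ)^β :=
    Real.one_lt_rpow_iff_of_pos two_pos |>.2 (Or.inl ⟨one_lt_two, hβ0⟩)
  set c2 : ℝ := ((2:ℝ)^β - 1)/2 with hc2def
  have hc2 : (0:ℝ) < c2 := by rw [hc2def]; linarith
  have hdiff : ∀ᶠ x in atTop, c2 * G x ≤ G (x/2) - G x := by
    filter_upwards [hhalf, hpos, eventually_ge_atTop (2:ℝ)] with x hh hp hx2
    have hx0 : (0:ℝ) < x := by linarith
    have hx1 : (1:ℝ) ≤ x := by linarith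
    have hx21 : (1:ℝ) ≤ x/2 := by linarith
    have hℓh : θ * ℓ x ≤ ℓ (x/2) := by
      rw [le_div_iff₀ hp] at hh; linarith
    rw [hpow x hx1, hpow (x/2) hx21]
    have hrw : (x/2) ^ (-β) = (2:ℝ)^β * x^(-β) := by
      rw [Real.div_rpow hx0.le (by norm_num), Real.rpow_neg hx0.le,
        Real.rpow_neg (by norm_num : (0:ℝ) ≤ 2)]
      field_simp
    rw [hrw]
    have hxβ : (0:ℝ) < x ^ (-β) := Real.rpow_pos_of_pos hx0 _
    have key : c2 * ℓ x ≤ ℓ (x/2) * (2:ℝ)^β - ℓ x := by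
      have h1 : (θ * ℓ x) * (2:ℝ)^β ≤ ℓ (x/2) * (2:ℝ)^β :=
        mul_le_mul_of_nonneg_right hℓh (by positivity)
      have hθ2 : θ * (2:ℝ)^β = ((2:ℝ)^β + 1)/2 := by
        rw [hθ]
        have : (2:ℝ)^(-β) * (2:ℝ)^β = 1 := by
          rw [← Real.rpow_add two_pos]; norm_num
        field_simp
        nlinarith [this]
      nlinarith [h1, hθ2]
    nlinarith [key, hxβ]
  -- apply dyadic lemma: find x0
  rw [eventually_atTop] at hstepG hdiff hpos
  obtain ⟨a1, ha1⟩ := hstepG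
  obtain ⟨a2, ha2⟩ := hdiff
  obtain ⟨a3, ha3⟩ := hpos
  set x0 : ℝ := max 1 (max a1 (max a2 a3)) with hx0def
  have hx01 : (1:ℝ) ≤ x0 := le_max_left _ _
  have hx0a1 : a1 ≤ x0 := le_trans (le_max_left _ _) (le_max_right _ _)
  have hx0a3 : a3 ≤ x0 := le_trans (le_max_right _ _) (le_trans (le_max_right _ _) (le_max_right _ _))
  have hG0 : 0 < G x0 := by
    rw [hpow x0 hx01]
    exact mul_pos (ha3 x0 hx0a3) (Real.rpow_pos_of_pos (by linarith) _)
  obtain ⟨c1, hc1, hc1b⟩ := dyadic_lower G x0 hx01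
    (fun x y hx hxy => hmono x y hxy) hG0 s (by linarith)
    (fun x hx => ha1 x (le_trans hx0a1 hx))
  refine ⟨c2 * c1, mul_pos hc2 hc1, ?_⟩
  filter_upwards [eventually_ge_atTop x0, eventually_ge_atTop a2] with x hx ha2x
  calc c2 * c1 * x ^ (-s) = c2 * (c1 * x ^ (-s)) := by ring
    _ ≤ c2 * G x := mul_le_mul_of_nonneg_left (hc1b x hx) hc2.le
    _ ≤ G (x/2) - G x := ha2 x ha2x


lemma meas_pred_eq_tsum {Ω : Type*} [MeasurableSpace Ω] (μ : Measure Ω)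
    (f : Ω → ℕ) (hf : Measurable f) (p : ℕ → Prop) [DecidablePred p] :
    μ {ω | p (f ω)} = ∑' j : ℕ, if p j then μ {ω | f ω = j} else 0 := by
  have hset : {ω | p (f ω)} = ⋃ j : ℕ, (if p j then f ⁻¹' {j} else ∅) := by
    ext ω
    simp only [Set.mem_setOf_eq, Set.mem_iUnion]
    constructor
    · intro h
      exact ⟨f ω, by simp [h]⟩
    · rintro ⟨j, hj⟩
      split_ifs at hj with h
      · rcases hj with hj
        simp only [Set.mem_preimage, Set.mem_singleton_iff] at hj
        rwa [hj]
      · exact absurd hj (Set.notMem_empty ω)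
  rw [hset, measure_iUnion]
  · congr 1
    funext j
    split_ifs with h
    · congr 1
    · simp
  · intro i j hij
    simp only [Function.onFun]
    apply Set.disjoint_left.2
    intro ω hi hj
    split_ifs at hi hj <;>
      simp only [Set.mem_preimage, Set.mem_singleton_iff, Set.mem_empty_iff_false] at hi hj
    exact hij (hi ▸ hj ▸ rfl)
  · intro j
    split_ifs
    · exact hf (measurableSet_singleton j)
    · exact MeasurableSet.empty


lemma ennreal_le_div_of_le_one {a b : ENNReal} (hb : b ≤ 1) : a ≤ a / b := by
  calc a = 1 * a := (one_mul a).symm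
    _ ≤ b⁻¹ * a := mul_le_mul_left (ENNReal.one_le_inv.2 hb) a
    _ = a / b := ENNReal.div_eq_inv_mul.symm

/-- With `D` power-law with exponent `τ ∈ (1,2)` and slowly varying `ℓ`,
`0 < α < 1/(τ-1)`, `ε_n > 0` with `ε_n → 0`, and `D' n i` (for `i < n`) i.i.d. copies of `D`
conditioned to be at most `n^α`, for every `0 < γ < 1 - α(τ-1)`,
`P(#{i < n : D' n i > ε_n n^α} ≥ n^γ) → 1` as `n → ∞`; that is, with high probability the
number of giant-degree vertices in the conditioned model is at least `n^γ`. -/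
theorem stmt13
    {Ω : Type*} [MeasureSpace Ω] [IsProbabilityMeasure (ℙ : Measure Ω)]
    (D : Ω → ℕ) (hDmeas : Measurable D) (hDpos : ∀ ω, 1 ≤ D ω)
    (τ : ℝ) (hτ : τ ∈ Set.Ioo (1 : ℝ) 2)
    (ℓ : ℝ → ℝ) (hℓ : SlowlyVarying ℓ)
    (hpow : ∀ x ≥ (1 : ℝ), (ℙ {ω | x < (D ω : ℝ)}).toReal = ℓ x * x ^ (-(τ - 1)))
    (α : ℝ) (hα : 0 < α) (hα' : α < 1 / (τ - 1))
    (εseq : ℕ → ℝ) (hεpos : ∀ n, 0 < εseq n) (hεlim : Tendsto εseq atTop (nhds 0))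
    (D' : ℕ → ℕ → Ω → ℕ) (hD'meas : ∀ n i, Measurable (D' n i))
    (hD'indep : ∀ n, iIndepFun (fun i : Fin n => D' n i) ℙ)
    (hD'dist : ∀ n, ∀ i < n, ∀ j : ℕ,
      ℙ {ω | D' n i ω = j}
        = if 1 ≤ j ∧ (j : ℝ) ≤ (n : ℝ) ^ α then
            ℙ {ω | D ω = j} / ℙ {ω | (D ω : ℝ) ≤ (n : ℝ) ^ α}
          else 0) :
    ∀ γ : ℝ, 0 < γ → γ < 1 - α * (τ - 1) →
      Tendsto
        (fun n : ℕ =>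
          ℙ {ω | (n : ℝ) ^ γ ≤
              (((Finset.range n).filter
                (fun i => εseq n * (n : ℝ) ^ α < (D' n i ω : ℝ))).card : ℝ)})
        atTop (nhds 1) := by
  classical
  intro γ hγ0 hγ1
  obtain ⟨hτ1, hτ2⟩ := hτ
  set β : ℝ := τ - 1 with hβdef
  have hβ0 : 0 < β := by rw [hβdef]; linarith
  have hαβ : α * β < 1 := by
    rw [lt_div_iff₀ hβ0] at hα'; linarith
  set δ : ℝ := (1 - α*β - γ)/2 with hδdef
  clear_value β
  have hδ0 : 0 < δ := by rw [hδdef]; linarith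
  clear_value δ
  set s : ℝ := β + δ/α with hsdef
  clear_value s
  have hsβ : β < s := by
    rw [hsdef]; have := div_pos hδ0 hα; linarith
  set θ : ℝ := γ + δ with hθdef
  clear_value θ
  have hθ0 : 0 < θ := by rw [hθdef]; linarith
  have h1αs : 1 - α*s = θ := by
    rw [hsdef, hθdef, hδdef]; field_simp; ring
  -- the tail function
  set G : ℝ → ℝ := fun x => (ℙ {ω | x < (D ω : ℝ)}).toReal with hGdef
  have hmono : ∀ x y : ℝ, x ≤ y → G y ≤ G x := by
    intro x y hxy
    apply ENNReal.toReal_mono (measure_ne_top _ _)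
    apply measure_mono
    intro ω hω
    exact lt_of_le_of_lt hxy hω
  obtain ⟨c, hc0, hkey⟩ := key_bound G ℓ hℓ β hβ0 hmono hpow s hsβ
  rw [eventually_atTop] at hkey
  obtain ⟨X1, hX1⟩ := hkey
  -- the target sets
  set T : ℕ → Set Ω := fun n => {ω | (n : ℝ) ^ γ ≤
      (((Finset.range n).filter
        (fun i => εseq n * (n : ℝ) ^ α < (D' n i ω : ℝ))).card : ℝ)} with hTdef
  -- measurability of the count function
  have hcount_meas : ∀ n : ℕ, Measurable (fun ω : Ω =>
      (((Finset.range n).filter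
        (fun i => εseq n * (n : ℝ) ^ α < (D' n i ω : ℝ))).card : ℝ)) := by
    intro n
    have : (fun ω : Ω =>
        (((Finset.range n).filter
          (fun i => εseq n * (n : ℝ) ^ α < (D' n i ω : ℝ))).card : ℝ)) =
        fun ω => ∑ i ∈ Finset.range n,
          if εseq n * (n : ℝ) ^ α < (D' n i ω : ℝ) then (1:ℝ) else 0 := by
      funext ω
      rw [Finset.card_filter]
      push_cast
      rfl
    rw [this]
    apply Finset.measurable_sum
    intro i _
    exact (Measurable.of_discrete (f := fun k : ℕ =>
      if εseq n * (n : ℝ) ^ α < (k : ℝ) then (1:ℝ) else 0)).comp (hD'meas n i)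
  have hTmeas : ∀ n, MeasurableSet (T n) :=
    fun n => measurableSet_le measurable_const (hcount_meas n)
  -- Main estimate: eventually ℙ (T n)ᶜ ≤ ofReal (4 / (c * n ^ θ))
  have hbound : ∀ᶠ n : ℕ in atTop, ℙ (T n)ᶜ ≤ ENNReal.ofReal (4 / (c * (n:ℝ)^θ)) := by
    have hnα : Tendsto (fun n : ℕ => ((n:ℝ))^α) atTop atTop :=
      (tendsto_rpow_atTop hα).comp tendsto_natCast_atTop_atTop
    have hnδ : Tendsto (fun n : ℕ => c * ((n:ℝ))^δ) atTop atTop :=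
      ((tendsto_rpow_atTop hδ0).comp tendsto_natCast_atTop_atTop).const_mul_atTop hc0
    filter_upwards [eventually_ge_atTop 1,
      hεlim.eventually (eventually_le_nhds (by norm_num : (0:ℝ) < 1/2)),
      hnα.eventually_ge_atTop X1, hnδ.eventually_ge_atTop 2] with n hn1 hε2 hXn h2c
    have hn1' : (1:ℝ) ≤ (n:ℝ) := by exact_mod_cast hn1
    have hn0 : (0:ℝ) < (n:ℝ) := by linarith
    have hb1 : (1:ℝ) ≤ (n:ℝ)^α := Real.one_le_rpow hn1' hα.le
    have hb0 : (0:ℝ) < (n:ℝ)^α := by linarith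
    have ha0 : (0:ℝ) < εseq n * (n:ℝ)^α := mul_pos (hεpos n) hb0
    have hab : εseq n * (n:ℝ)^α ≤ (n:ℝ)^α/2 := by
      have := mul_le_mul_of_nonneg_right hε2 hb0.le
      linarith
    -- lower bound on single-coordinate success probability
    have hprlow : ∀ i : Fin n, c * (n:ℝ)^(-(α*s)) ≤
        (ℙ {ω | εseq n * (n:ℝ)^α < (D' n i.1 ω : ℝ)}).toReal := by
      intro i
      have e1 : ℙ {ω | εseq n * (n:ℝ)^α < (D ω:ℝ) ∧ (D ω:ℝ) ≤ (n:ℝ)^α}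
          = ∑' j : ℕ, if εseq n * (n:ℝ)^α < (j:ℝ) ∧ (j:ℝ) ≤ (n:ℝ)^α
              then ℙ {ω | D ω = j} else 0 :=
        meas_pred_eq_tsum ℙ D hDmeas
          (fun j => εseq n * (n:ℝ)^α < (j:ℝ) ∧ (j:ℝ) ≤ (n:ℝ)^α)
      have e2 : ℙ {ω | εseq n * (n:ℝ)^α < (D' n i.1 ω : ℝ)}
          = ∑' j : ℕ, if εseq n * (n:ℝ)^α < (j:ℝ) then ℙ {ω | D' n i.1 ω = j} else 0 :=
        meas_pred_eq_tsum ℙ (D' n i.1) (hD'meas n i.1) (fun j => εseq n * (n:ℝ)^α < (j:ℝ))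
      have hA : ℙ {ω | εseq n * (n:ℝ)^α < (D ω:ℝ) ∧ (D ω:ℝ) ≤ (n:ℝ)^α}
          ≤ ℙ {ω | εseq n * (n:ℝ)^α < (D' n i.1 ω : ℝ)} := by
        rw [e1, e2]
        apply ENNReal.tsum_le_tsum
        intro j
        by_cases hj : εseq n * (n:ℝ)^α < (j:ℝ) ∧ (j:ℝ) ≤ (n:ℝ)^α
        · rw [if_pos hj, if_pos hj.1, hD'dist n i.1 i.isLt j]
          have hj1 : 1 ≤ j := by
            have : (0:ℝ) < (j:ℝ) := lt_trans ha0 hj.1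
            exact_mod_cast Nat.one_le_iff_ne_zero.2 (by exact_mod_cast this.ne')
          rw [if_pos ⟨hj1, hj.2⟩]
          exact ennreal_le_div_of_le_one prob_le_one
        · rw [if_neg hj]; exact zero_le
      -- the D-event probability in terms of G
      have hsubev : {ω | (n:ℝ)^α < (D ω:ℝ)} ⊆ {ω | εseq n * (n:ℝ)^α < (D ω:ℝ)} :=
        fun ω h => lt_of_le_of_lt (show εseq n * (n:ℝ)^α ≤ (n:ℝ)^α by linarith) h
      have hmeasb : MeasurableSet {ω | (n:ℝ)^α < (D ω:ℝ)} :=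
        hDmeas (MeasurableSet.of_discrete (s := {k : ℕ | (n:ℝ)^α < (k:ℝ)}))
      have hAeq : {ω | εseq n * (n:ℝ)^α < (D ω:ℝ) ∧ (D ω:ℝ) ≤ (n:ℝ)^α}
          = {ω | εseq n * (n:ℝ)^α < (D ω:ℝ)} \ {ω | (n:ℝ)^α < (D ω:ℝ)} := by
        ext ω
        simp only [Set.mem_setOf_eq, Set.mem_diff, not_lt]
      have hAval : (ℙ {ω | εseq n * (n:ℝ)^α < (D ω:ℝ) ∧ (D ω:ℝ) ≤ (n:ℝ)^α}).toReal
          = G (εseq n * (n:ℝ)^α) - G ((n:ℝ)^α) := by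
        rw [hAeq, measure_diff hsubev hmeasb.nullMeasurableSet (measure_ne_top _ _),
          ENNReal.toReal_sub_of_le (measure_mono hsubev) (measure_ne_top _ _)]
      have hrpow : ((n:ℝ)^α) ^ (-s) = (n:ℝ)^(-(α*s)) := by
        rw [← Real.rpow_mul (le_of_lt hn0)]
        ring_nf
      calc c * (n:ℝ)^(-(α*s)) = c * ((n:ℝ)^α) ^ (-s) := by rw [hrpow]
        _ ≤ G ((n:ℝ)^α/2) - G ((n:ℝ)^α) := hX1 ((n:ℝ)^α) hXn
        _ ≤ G (εseq n * (n:ℝ)^α) - G ((n:ℝ)^α) := by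
            have := hmono (εseq n * (n:ℝ)^α) ((n:ℝ)^α/2) hab
            linarith
        _ = (ℙ {ω | εseq n * (n:ℝ)^α < (D ω:ℝ) ∧ (D ω:ℝ) ≤ (n:ℝ)^α}).toReal := hAval.symm
        _ ≤ (ℙ {ω | εseq n * (n:ℝ)^α < (D' n i.1 ω : ℝ)}).toReal :=
            ENNReal.toReal_mono (measure_ne_top _ _) hA
    -- indicator random variables
    set φ : ℕ → ℝ := fun k => if εseq n * (n:ℝ)^α < (k:ℝ) then (1:ℝ) else 0 with hφdef
    have hφmeas : Measurable φ := Measurable.of_discrete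
    set X : Fin n → Ω → ℝ := fun i ω => φ (D' n i.1 ω) with hXdef
    have hXmeas : ∀ i, Measurable (X i) := fun i => hφmeas.comp (hD'meas n i.1)
    have hEmeas : ∀ i : Fin n, MeasurableSet {ω | εseq n * (n:ℝ)^α < (D' n i.1 ω : ℝ)} :=
      fun i => hD'meas n i.1
        (MeasurableSet.of_discrete (s := {k : ℕ | εseq n * (n:ℝ)^α < (k:ℝ)}))
    have hXeq : ∀ i : Fin n,
        X i = Set.indicator {ω | εseq n * (n:ℝ)^α < (D' n i.1 ω : ℝ)} (fun _ => (1:ℝ)) := by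
      intro i; funext ω
      rw [Set.indicator_apply]
      simp only [Set.mem_setOf_eq, hXdef, hφdef]
    have hXL2 : ∀ i : Fin n, MemLp (X i) 2 ℙ := by
      intro i; rw [hXeq i]
      exact MemLp.indicator (hEmeas i) (memLp_const 1)
    have hXint : ∀ i : Fin n, Integrable (X i) ℙ := fun i => (hXL2 i).integrable one_le_two
    have hXexp : ∀ i : Fin n,
        ∫ ω, X i ω ∂ℙ = (ℙ {ω | εseq n * (n:ℝ)^α < (D' n i.1 ω : ℝ)}).toReal := by
      intro i
      rw [hXeq i]
      exact integral_indicator_one (hEmeas i)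
    set M : ℝ := ∑ i : Fin n, (ℙ {ω | εseq n * (n:ℝ)^α < (D' n i.1 ω : ℝ)}).toReal with hMdef
    set Sf : Ω → ℝ := ∑ i : Fin n, X i with hSdef
    have hSapply : ∀ ω, Sf ω = ∑ i : Fin n, X i ω := by
      intro ω; rw [hSdef]; exact Finset.sum_apply ω Finset.univ X
    have hSL2 : MemLp Sf 2 ℙ := memLp_finset_sum' _ (fun i _ => hXL2 i)
    have hSexp : ∫ ω, Sf ω ∂ℙ = M := by
      rw [hMdef]
      calc ∫ ω, Sf ω ∂ℙ = ∫ ω, ∑ i : Fin n, X i ω ∂ℙ := by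
            congr 1; funext ω; exact hSapply ω
        _ = ∑ i : Fin n, ∫ ω, X i ω ∂ℙ := integral_finset_sum _ (fun i _ => hXint i)
        _ = _ := Finset.sum_congr rfl fun i _ => hXexp i
    have hpairwise : Set.Pairwise ↑(Finset.univ : Finset (Fin n))
        (fun i j => IndepFun (X i) (X j) ℙ) := by
      intro i _ j _ hij
      exact ((hD'indep n).indepFun hij).comp hφmeas hφmeas
    have hvar : variance Sf ℙ ≤ M := by
      rw [hSdef, IndepFun.variance_sum (fun i _ => hXL2 i) hpairwise, hMdef]
      apply Finset.sum_le_sum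
      intro i _
      have h2 : X i ^ 2 = X i := by
        funext ω
        simp only [Pi.pow_apply, hXdef, hφdef]
        split_ifs <;> norm_num
      calc variance (X i) ℙ ≤ ∫ ω, (X i ^ 2) ω ∂ℙ :=
            variance_le_expectation_sq (hXmeas i).aestronglyMeasurable
        _ = ∫ ω, X i ω ∂ℙ := by rw [h2]
        _ = _ := hXexp i
    -- bounds on M
    have hMlow : c * (n:ℝ)^θ ≤ M := by
      have hsum := Finset.card_nsmul_le_sum Finset.univ
        (fun i : Fin n => (ℙ {ω | εseq n * (n:ℝ)^α < (D' n i.1 ω : ℝ)}).toReal)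
        (c * (n:ℝ)^(-(α*s))) (fun i _ => hprlow i)
      rw [Finset.card_univ, Fintype.card_fin, nsmul_eq_mul] at hsum
      have hsplit : (n:ℝ)^θ = (n:ℝ) * (n:ℝ)^(-(α*s)) := by
        rw [← h1αs, show 1 - α*s = 1 + -(α*s) by ring, Real.rpow_add hn0, Real.rpow_one]
      rw [hMdef]
      calc c * (n:ℝ)^θ = (n:ℝ) * (c * (n:ℝ)^(-(α*s))) := by rw [hsplit]; ring
        _ ≤ _ := hsum
    have hM0 : (0:ℝ) < M := lt_of_lt_of_le (by positivity) hMlow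
    have hγM : (n:ℝ)^γ ≤ M/2 := by
      have hγ0' : (0:ℝ) ≤ (n:ℝ)^γ := (Real.rpow_pos_of_pos hn0 γ).le
      have hsplit2 : (n:ℝ)^θ = (n:ℝ)^δ * (n:ℝ)^γ := by
        rw [hθdef, show γ + δ = δ + γ by ring, Real.rpow_add hn0]
      have h1 : 2 * (n:ℝ)^γ ≤ c * (n:ℝ)^θ := by
        calc 2 * (n:ℝ)^γ ≤ (c * (n:ℝ)^δ) * (n:ℝ)^γ :=
              mul_le_mul_of_nonneg_right h2c hγ0'
          _ = c * (n:ℝ)^θ := by rw [hsplit2]; ring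
      linarith
    have hccpos : (0:ℝ) < M - (n:ℝ)^γ := by
      have := Real.rpow_pos_of_pos hn0 γ
      linarith
    have hcheb := meas_ge_le_variance_div_sq (μ := ℙ) hSL2 hccpos
    rw [hSexp] at hcheb
    have hsubset : (T n)ᶜ ⊆ {ω | M - (n:ℝ)^γ ≤ |Sf ω - M|} := by
      intro ω hω
      simp only [hTdef, Set.mem_compl_iff, Set.mem_setOf_eq, not_le] at hω
      have hcard : (((Finset.range n).filter
          (fun i => εseq n * (n:ℝ)^α < (D' n i ω : ℝ))).card : ℝ) = Sf ω := by
        rw [Finset.card_filter, hSapply]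
        push_cast
        exact (Fin.sum_univ_eq_sum_range
          (fun k => if εseq n * (n:ℝ)^α < ((D' n k ω : ℕ):ℝ) then (1:ℝ) else 0) n).symm
      rw [hcard] at hω
      simp only [Set.mem_setOf_eq]
      have habs := neg_le_abs (Sf ω - M)
      linarith
    calc ℙ (T n)ᶜ ≤ ℙ {ω | M - (n:ℝ)^γ ≤ |Sf ω - M|} := measure_mono hsubset
      _ ≤ ENNReal.ofReal (variance Sf ℙ / (M - (n:ℝ)^γ)^2) := hcheb
      _ ≤ ENNReal.ofReal (4 / (c * (n:ℝ)^θ)) := by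
          apply ENNReal.ofReal_le_ofReal
          have hv0 : 0 ≤ variance Sf ℙ := variance_nonneg _ _
          calc variance Sf ℙ / (M - (n:ℝ)^γ)^2 ≤ M / (M/2)^2 :=
                div_le_div₀ hM0.le hvar (by positivity)
                  (pow_le_pow_left₀ (by linarith) (by linarith) 2)
            _ = 4 / M := by field_simp; ring
            _ ≤ 4 / (c * (n:ℝ)^θ) :=
                div_le_div_of_nonneg_left (by norm_num) (by positivity) hMlow
  -- conclusion
  have hcompl0 : Tendsto (fun n => ℙ (T n)ᶜ) atTop (nhds 0) := by
    have hup : Tendsto (fun n : ℕ => ENNReal.ofReal (4 / (c * (n:ℝ)^θ))) atTop (nhds 0) := by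
      rw [show (0 : ENNReal) = ENNReal.ofReal 0 by simp]
      apply ENNReal.tendsto_ofReal
      apply Tendsto.div_atTop tendsto_const_nhds
      exact ((tendsto_rpow_atTop hθ0).comp tendsto_natCast_atTop_atTop).const_mul_atTop hc0
    exact tendsto_of_tendsto_of_tendsto_of_le_of_le' tendsto_const_nhds hup
      (Eventually.of_forall fun n => zero_le) hbound
  have : Tendsto (fun n => 1 - ℙ (T n)ᶜ) atTop (nhds 1) := by
    have := ENNReal.Tendsto.sub (tendsto_const_nhds (x := (1:ENNReal))) hcompl0
      (Or.inl ENNReal.one_ne_top)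
    simpa using this
  apply this.congr
  intro n
  rw [← prob_compl_eq_one_sub (hTmeas n).compl, compl_compl]
end
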